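/- arXiv:2207.11074 — 12 statements merged into one kernel-verified Lean document; each statement's English description precedes it below -/
import Mathlib

section
/- (Maximum principle for the steady aging equation.) Let H > 0, κ > 0, θ∞ > 0, let g : [−H,H] → [0,∞) be continuous, let f1 : ℝ → ℝ be continuous, nonnegative and nondecreasing with f1(0) = 0, and let f0 : ℝ → ℝ be continuous and strictly decreasing with f0(θ∞) = 0. If θ : [−H,H] → ℝ is twice continuously differentiable, satisfies κ θ''(x) = g(x) f1(θ(x)) − f0(θ(x)) for every x ∈ (−H,H), and θ(−H) = θ(H) = θ∞, then 0 ≤ θ(x) ≤ θ∞ for every x ∈ [−H,H]. -/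
open MeasureTheory Set Filter Topology

noncomputable section

/-- On the open interval, the iterated `derivWithin` over `Icc` agrees with
the usual second derivative. -/
lemma dwdw_eq_deriv2 (H : ℝ) (θ : ℝ → ℝ) {x : ℝ} (hx : x ∈ Set.Ioo (-H) H) :
    derivWithin (derivWithin θ (Set.Icc (-H) H)) (Set.Icc (-H) H) x
      = deriv (deriv θ) x := by
  have h1 : derivWithin θ (Set.Icc (-H) H) =ᶠ[𝓝 x] deriv θ := by
    filter_upwards [Ioo_mem_nhds hx.1 hx.2] with y hy
    exact derivWithin_of_mem_nhds (Icc_mem_nhds hy.1 hy.2)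
  rw [Filter.EventuallyEq.derivWithin_eq (h1.filter_mono nhdsWithin_le_nhds)
    h1.self_of_nhds, derivWithin_of_mem_nhds (Icc_mem_nhds hx.1 hx.2)]

/-- Maximum-principle core: if `φ` is continuous on `[-H,H]`, its second
derivative is positive wherever `φ > c` in the interior, and `φ ≤ c` at the
endpoints, then `φ ≤ c` on all of `[-H,H]`. -/
lemma max_principle_aux (H c : ℝ) (φ : ℝ → ℝ)
    (hc : ContinuousOn φ (Set.Icc (-H) H))
    (hconv : ∀ x ∈ Set.Ioo (-H) H, c < φ x → 0 < deriv (deriv φ) x)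
    (hl : φ (-H) ≤ c) (hr : φ H ≤ c) :
    ∀ x ∈ Set.Icc (-H) H, φ x ≤ c := by
  by_contra h
  push_neg at h
  obtain ⟨x0, hx0, hgt⟩ := h
  -- the set to the right of x0 where φ ≤ c
  set Sb : Set ℝ := Set.Icc x0 H ∩ {x | φ x ≤ c} with hSb
  have hSb_closed : IsClosed Sb :=
    (hc.mono (Set.Icc_subset_Icc hx0.1 le_rfl)).preimage_isClosed_of_isClosed
      isClosed_Icc isClosed_Iic
  have hSb_ne : Sb.Nonempty := ⟨H, ⟨hx0.2, le_rfl⟩, hr⟩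
  have hSb_bdd : BddBelow Sb := ⟨x0, fun y hy => hy.1.1⟩
  set b : ℝ := sInf Sb with hbdef
  have hbS : b ∈ Sb := hSb_closed.csInf_mem hSb_ne hSb_bdd
  have hbge : x0 ≤ b := hbS.1.1
  have hbH : b ≤ H := hbS.1.2
  have hbφ : φ b ≤ c := hbS.2
  have hbgt : x0 < b := lt_of_le_of_ne hbge fun h => absurd (h ▸ hgt) (not_lt.2 hbφ)
  have hbmin : ∀ x, x0 ≤ x → x < b → c < φ x := by
    intro x hx1 hx2
    by_contra hle
    push_neg at hle
    exact absurd (csInf_le hSb_bdd ⟨⟨hx1, hx2.le.trans hbH⟩, hle⟩) (not_le.2 hx2)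
  -- the set to the left of x0 where φ ≤ c
  set Sa : Set ℝ := Set.Icc (-H) x0 ∩ {x | φ x ≤ c} with hSa
  have hSa_closed : IsClosed Sa :=
    (hc.mono (Set.Icc_subset_Icc le_rfl hx0.2)).preimage_isClosed_of_isClosed
      isClosed_Icc isClosed_Iic
  have hSa_ne : Sa.Nonempty := ⟨-H, ⟨le_rfl, hx0.1⟩, hl⟩
  have hSa_bdd : BddAbove Sa := ⟨x0, fun y hy => hy.1.2⟩
  set a : ℝ := sSup Sa with hadef
  have haS : a ∈ Sa := hSa_closed.csSup_mem hSa_ne hSa_bdd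
  have hale : a ≤ x0 := haS.1.2
  have haH : -H ≤ a := haS.1.1
  have haφ : φ a ≤ c := haS.2
  have halt : a < x0 := lt_of_le_of_ne hale fun h => absurd (h ▸ haφ) (not_le.2 (h ▸ hgt))
  have hamax : ∀ x, a < x → x ≤ x0 → c < φ x := by
    intro x hx1 hx2
    by_contra hle
    push_neg at hle
    exact absurd (le_csSup hSa_bdd ⟨⟨haH.trans hx1.le, hx2⟩, hle⟩) (not_le.2 hx1)
  have hab : a < b := halt.trans hbgt
  have hsubI : Set.Icc a b ⊆ Set.Icc (-H) H :=
    Set.Icc_subset_Icc haH hbH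
  have hpos : ∀ x ∈ Set.Ioo a b, c < φ x := by
    intro x hx
    rcases le_total x x0 with hle | hle
    · exact hamax x hx.1 hle
    · exact hbmin x hle hx.2
  have hsubO : Set.Ioo a b ⊆ Set.Ioo (-H) H := fun x hx =>
    ⟨lt_of_le_of_lt haH hx.1, lt_of_lt_of_le hx.2 hbH⟩
  have hsc : StrictConvexOn ℝ (Set.Icc a b) φ := by
    apply strictConvexOn_of_deriv2_pos (convex_Icc a b) (hc.mono hsubI)
    intro x hx
    rw [interior_Icc] at hx
    have h2 : deriv^[2] φ x = deriv (deriv φ) x := by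
      simp [Function.iterate_succ, Function.comp]
    rw [h2]
    exact hconv x (hsubO hx) (hpos x hx)
  have hx0mem : x0 ∈ openSegment ℝ a b := by
    rw [openSegment_eq_Ioo hab]
    exact ⟨halt, hbgt⟩
  have := hsc.lt_on_openSegment (Set.left_mem_Icc.2 hab.le)
    (Set.right_mem_Icc.2 hab.le) hab.ne hx0mem
  have hmax : max (φ a) (φ b) ≤ c := max_le haφ hbφ
  linarith

/-- maximum principle for the steady aging equation.
If `θ` is `C²` on `[-H,H]`, solves `κ θ'' = g f1(θ) - f0(θ)` on `(-H,H)` and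
has boundary values `θ(±H) = θ∞`, where `g ≥ 0` is continuous, `f1` is
continuous, nonnegative and nondecreasing with `f1(0) = 0`, and `f0` is
continuous and strictly decreasing with `f0(θ∞) = 0`, then
`0 ≤ θ ≤ θ∞` on `[-H,H]`. -/
theorem aging_maximum_principle
    (H κ θinf : ℝ) (hH : 0 < H) (hκ : 0 < κ) (hθinf : 0 < θinf)
    (g f0 f1 θ : ℝ → ℝ)
    (hgc : ContinuousOn g (Set.Icc (-H) H))
    (hgnn : ∀ x ∈ Set.Icc (-H) H, 0 ≤ g x)
    (hf1c : Continuous f1) (hf1nn : ∀ t, 0 ≤ f1 t)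
    (hf1mono : Monotone f1) (hf10 : f1 0 = 0)
    (hf0c : Continuous f0) (hf0anti : StrictAnti f0) (hf0inf : f0 θinf = 0)
    (hθ : ContDiffOn ℝ 2 θ (Set.Icc (-H) H))
    (heq : ∀ x ∈ Set.Ioo (-H) H,
      κ * derivWithin (derivWithin θ (Set.Icc (-H) H)) (Set.Icc (-H) H) x
        = g x * f1 (θ x) - f0 (θ x))
    (hbcl : θ (-H) = θinf) (hbcr : θ H = θinf) :
    ∀ x ∈ Set.Icc (-H) H, 0 ≤ θ x ∧ θ x ≤ θinf := by
  have heq' : ∀ x ∈ Set.Ioo (-H) H,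
      κ * deriv (deriv θ) x = g x * f1 (θ x) - f0 (θ x) := by
    intro x hx
    rw [← dwdw_eq_deriv2 H θ hx]
    exact heq x hx
  -- upper bound
  have hub : ∀ x ∈ Set.Icc (-H) H, θ x ≤ θinf := by
    apply max_principle_aux H θinf θ hθ.continuousOn
    · intro x hx hgt
      have hd := heq' x hx
      have hf0neg : f0 (θ x) < 0 := hf0inf ▸ hf0anti hgt
      have hg : 0 ≤ g x * f1 (θ x) :=
        mul_nonneg (hgnn x (Set.Ioo_subset_Icc_self hx)) (hf1nn _)
      have hm : 0 < κ * deriv (deriv θ) x := by rw [hd]; linarith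
      rcases mul_pos_iff.mp hm with ⟨_, h⟩ | ⟨h, _⟩
      · exact h
      · linarith
    · exact hbcl.le
    · exact hbcr.le
  -- lower bound
  have hlb : ∀ x ∈ Set.Icc (-H) H, -θ x ≤ 0 := by
    apply max_principle_aux H 0 (fun y => -θ y) hθ.continuousOn.neg
    · intro x hx hgt
      have hθneg : θ x < 0 := by simpa using hgt
      have hd := heq' x hx
      have hf1z : f1 (θ x) = 0 :=
        le_antisymm (hf10 ▸ hf1mono hθneg.le) (hf1nn _)
      have hf0pos : 0 < f0 (θ x) := hf0inf ▸ hf0anti (hθneg.trans hθinf)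
      rw [hf1z, mul_zero, zero_sub] at hd
      have hm : κ * deriv (deriv θ) x < 0 := by rw [hd]; linarith
      have hDneg : deriv (deriv θ) x < 0 := by
        rcases mul_neg_iff.mp hm with ⟨_, h⟩ | ⟨h, _⟩
        · exact h
        · linarith
      have hDD : deriv (deriv (fun y => -θ y)) x = -(deriv (deriv θ) x) := by
        rw [deriv.fun_neg']; exact deriv.fun_neg
      rw [hDD]; linarith
    · show -θ (-H) ≤ 0
      rw [hbcl]; linarith
    · show -θ H ≤ 0
      rw [hbcr]; linarith
  intro x hx
  refine ⟨by linarith [hlb x hx], hub x hx⟩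

end
end

section
/- (Well-posedness and continuity of the inverse plastic flow map Π.) Let μ : ℝ² → ℝ be continuous and such that for every θ ∈ ℝ: the map π ↦ μ(π,θ) is strictly increasing on [0,∞) and strictly decreasing on (−∞,0], μ(0,θ) > 0, and μ(π,θ) → +∞ both as π → +∞ and as π → −∞. Then for every (σ, θ) ∈ ℝ² there exists a unique π ∈ ℝ for which there is ξ ∈ Sign(π) with σ = μ(π,θ)·ξ; and the resulting map Π : ℝ² → ℝ, Π(σ,θ) := this unique π, is continuous. -/
open MeasureTheory Set Filter

noncomputable section

/-- The set-valued sign function. -/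
def SignSet (p : ℝ) : Set ℝ :=
  if 0 < p then {1} else if p < 0 then {-1} else Set.Icc (-1) 1

/-- Case-split characterization of the flow relation. -/
def PRel (μ : ℝ → ℝ → ℝ) (σ t p : ℝ) : Prop :=
  (0 < p ∧ σ = μ p t) ∨ (p < 0 ∧ σ = -μ p t) ∨ (p = 0 ∧ |σ| ≤ μ 0 t)

theorem mu_pos {μ : ℝ → ℝ → ℝ}
    (hmono : ∀ t, StrictMonoOn (fun p => μ p t) (Set.Ici (0:ℝ)))
    (hanti : ∀ t, StrictAntiOn (fun p => μ p t) (Set.Iic (0:ℝ)))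
    (hpos : ∀ t, 0 < μ 0 t) : ∀ p t, 0 < μ p t := by
  intro p t
  rcases lt_trichotomy p 0 with h | rfl | h
  · exact (hpos t).trans
      ((hanti t) (Set.mem_Iic.mpr h.le) (Set.mem_Iic.mpr le_rfl) h)
  · exact hpos t
  · exact (hpos t).trans
      ((hmono t) (Set.mem_Ici.mpr le_rfl) (Set.mem_Ici.mpr h.le) h)

theorem prel_iff {μ : ℝ → ℝ → ℝ} (hpos : ∀ p t, 0 < μ p t) (σ t p : ℝ) :
    (∃ ξ ∈ SignSet p, σ = μ p t * ξ) ↔ PRel μ σ t p := by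
  rcases lt_trichotomy p 0 with hp | rfl | hp
  · have hS : SignSet p = {-1} := by
      unfold SignSet
      rw [if_neg (by linarith), if_pos hp]
    rw [hS]
    unfold PRel
    constructor
    · rintro ⟨ξ, hξ, rfl⟩
      rw [Set.mem_singleton_iff] at hξ; subst hξ
      exact Or.inr (Or.inl ⟨hp, by ring⟩)
    · rintro (⟨h, _⟩ | ⟨_, h⟩ | ⟨h, _⟩)
      · linarith
      · exact ⟨-1, rfl, by rw [h]; ring⟩
      · linarith
  · have hS : SignSet 0 = Set.Icc (-1) 1 := by
      unfold SignSet
      rw [if_neg (lt_irrefl (0:ℝ)), if_neg (lt_irrefl (0:ℝ))]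
    rw [hS]
    unfold PRel
    constructor
    · rintro ⟨ξ, hξ, rfl⟩
      refine Or.inr (Or.inr ⟨rfl, ?_⟩)
      rw [abs_mul, abs_of_pos (hpos 0 t)]
      have h1 : |ξ| ≤ 1 := abs_le.mpr ⟨hξ.1, hξ.2⟩
      nlinarith [hpos 0 t, abs_nonneg ξ]
    · rintro (⟨h, _⟩ | ⟨h, _⟩ | ⟨_, h⟩)
      · exact absurd h (lt_irrefl 0)
      · exact absurd h (lt_irrefl 0)
      · have hne : μ 0 t ≠ 0 := (hpos 0 t).ne'
        have hξ : |σ / μ 0 t| ≤ 1 := by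
          rw [abs_div, abs_of_pos (hpos 0 t)]
          exact (div_le_one (hpos 0 t)).mpr h
        exact ⟨σ / μ 0 t, Set.mem_Icc.mpr (abs_le.mp hξ), by field_simp⟩
  · have hS : SignSet p = {1} := by
      unfold SignSet
      rw [if_pos hp]
    rw [hS]
    unfold PRel
    constructor
    · rintro ⟨ξ, hξ, rfl⟩
      rw [Set.mem_singleton_iff] at hξ; subst hξ
      exact Or.inl ⟨hp, by ring⟩
    · rintro (⟨_, h⟩ | ⟨h, _⟩ | ⟨h, _⟩)
      · exact ⟨1, rfl, by rw [h]; ring⟩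
      · linarith
      · linarith

theorem prel_exists {μ : ℝ → ℝ → ℝ}
    (hcont : Continuous (fun q : ℝ × ℝ => μ q.1 q.2))
    (hpos : ∀ t, 0 < μ 0 t)
    (htop : ∀ t, Tendsto (fun p => μ p t) atTop atTop)
    (hbot : ∀ t, Tendsto (fun p => μ p t) atBot atTop)
    (σ t : ℝ) : ∃ p, PRel μ σ t p := by
  have hμp : Continuous fun p => μ p t :=
    hcont.comp (continuous_id.prodMk continuous_const)
  by_cases habs : |σ| ≤ μ 0 t
  · exact ⟨0, Or.inr (Or.inr ⟨rfl, habs⟩)⟩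
  · push_neg at habs
    rcases lt_or_ge σ 0 with hσneg | hσnn
    · have hσ : μ 0 t < -σ := by
        rw [abs_of_neg hσneg] at habs; exact habs
      obtain ⟨a, ha1, ha2⟩ :=
        (((hbot t).eventually_ge_atTop (-σ)).and (eventually_le_atBot (0:ℝ))).exists
      have hsub := intermediate_value_Icc' ha2 hμp.continuousOn
      obtain ⟨p, hpmem, hpeq⟩ := hsub ⟨hσ.le, ha1⟩
      have hpeq' : μ p t = -σ := hpeq
      refine ⟨p, Or.inr (Or.inl ⟨?_, by linarith⟩)⟩
      rcases lt_or_eq_of_le hpmem.2 with h | h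
      · exact h
      · exfalso; rw [h] at hpeq'; linarith
    · have hσ : μ 0 t < σ := by
        rw [abs_of_nonneg hσnn] at habs; exact habs
      obtain ⟨b, hb1, hb2⟩ :=
        (((htop t).eventually_ge_atTop σ).and (eventually_ge_atTop (0:ℝ))).exists
      have hsub := intermediate_value_Icc hb2 hμp.continuousOn
      obtain ⟨p, hpmem, hpeq⟩ := hsub ⟨hσ.le, hb1⟩
      have hpeq' : μ p t = σ := hpeq
      refine ⟨p, Or.inl ⟨?_, hpeq'.symm⟩⟩
      rcases lt_or_eq_of_le hpmem.1 with h | h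
      · exact h
      · exfalso; rw [← h] at hpeq'; linarith

theorem prel_unique {μ : ℝ → ℝ → ℝ}
    (hmono : ∀ t, StrictMonoOn (fun p => μ p t) (Set.Ici (0:ℝ)))
    (hanti : ∀ t, StrictAntiOn (fun p => μ p t) (Set.Iic (0:ℝ)))
    (hpos : ∀ t, 0 < μ 0 t)
    {σ t p q : ℝ} (hp : PRel μ σ t p) (hq : PRel μ σ t q) : p = q := by
  have key : ∀ r, PRel μ σ t r → 0 < r → μ 0 t < σ := by
    rintro r (⟨h1, h2⟩ | ⟨h1, h2⟩ | ⟨h1, h2⟩) hr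
    · have h3 : μ (0:ℝ) t < μ r t :=
        (hmono t) (Set.mem_Ici.mpr le_rfl) (Set.mem_Ici.mpr hr.le) hr
      linarith
    · linarith
    · linarith
  have key' : ∀ r, PRel μ σ t r → r < 0 → σ < -μ 0 t := by
    rintro r (⟨h1, h2⟩ | ⟨h1, h2⟩ | ⟨h1, h2⟩) hr
    · linarith
    · have h3 : μ (0:ℝ) t < μ r t :=
        (hanti t) (Set.mem_Iic.mpr hr.le) (Set.mem_Iic.mpr le_rfl) hr
      linarith
    · linarith
  rcases hp with ⟨hp1, hp2⟩ | ⟨hp1, hp2⟩ | ⟨hp1, hp2⟩ <;>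
    rcases hq with ⟨hq1, hq2⟩ | ⟨hq1, hq2⟩ | ⟨hq1, hq2⟩
  · exact (hmono t).injOn (Set.mem_Ici.mpr hp1.le) (Set.mem_Ici.mpr hq1.le)
      (by rw [← hp2, ← hq2])
  · have h1 := key p (Or.inl ⟨hp1, hp2⟩) hp1
    have h2 := key' q (Or.inr (Or.inl ⟨hq1, hq2⟩)) hq1
    have := hpos t; linarith
  · have h1 := key p (Or.inl ⟨hp1, hp2⟩) hp1
    have := le_of_abs_le hq2; linarith
  · have h1 := key' p (Or.inr (Or.inl ⟨hp1, hp2⟩)) hp1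
    have h2 := key q (Or.inl ⟨hq1, hq2⟩) hq1
    have := hpos t; linarith
  · exact (hanti t).injOn (Set.mem_Iic.mpr hp1.le) (Set.mem_Iic.mpr hq1.le)
      (show μ p t = μ q t by linarith)
  · have h1 := key' p (Or.inr (Or.inl ⟨hp1, hp2⟩)) hp1
    have h2 := (abs_le.mp hq2).1
    linarith
  · have h1 := key q (Or.inl ⟨hq1, hq2⟩) hq1
    have := le_of_abs_le hp2; linarith
  · have h1 := key' q (Or.inr (Or.inl ⟨hq1, hq2⟩)) hq1
    have h2 := (abs_le.mp hp2).1
    linarith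
  · rw [hp1, hq1]

/-- well-posedness and continuity of the inverse plastic flow
map `Π`.  If `μ` is continuous, `π ↦ μ(π,θ)` is strictly increasing on `[0,∞)`
and strictly decreasing on `(-∞,0]` with `μ(0,θ) > 0` and `μ(π,θ) → ∞` as
`π → ±∞`, then for each `(σ,θ)` there is a unique `π` with
`σ ∈ μ(π,θ)·Sign(π)`, and the resulting map `(σ,θ) ↦ π` is continuous. -/
theorem inverse_flow_map_wellposed
    (μ : ℝ → ℝ → ℝ)
    (hcont : Continuous (fun q : ℝ × ℝ => μ q.1 q.2))
    (hmono : ∀ t, StrictMonoOn (fun p => μ p t) (Set.Ici (0:ℝ)))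
    (hanti : ∀ t, StrictAntiOn (fun p => μ p t) (Set.Iic (0:ℝ)))
    (hpos : ∀ t, 0 < μ 0 t)
    (htop : ∀ t, Tendsto (fun p => μ p t) atTop atTop)
    (hbot : ∀ t, Tendsto (fun p => μ p t) atBot atTop) :
    (∀ σ t : ℝ, ∃! p : ℝ, ∃ ξ ∈ SignSet p, σ = μ p t * ξ) ∧
    ∃ Pmap : ℝ → ℝ → ℝ,
      Continuous (fun q : ℝ × ℝ => Pmap q.1 q.2) ∧
      ∀ σ t : ℝ, ∃ ξ ∈ SignSet (Pmap σ t), σ = μ (Pmap σ t) t * ξ := by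
  have hμpos : ∀ p t, 0 < μ p t := mu_pos hmono hanti hpos
  have hiff := prel_iff (μ := μ) hμpos
  have hex : ∀ σ t, ∃ p, PRel μ σ t p := prel_exists hcont hpos htop hbot
  have huniq : ∀ {σ t p q : ℝ}, PRel μ σ t p → PRel μ σ t q → p = q :=
    fun hp hq => prel_unique hmono hanti hpos hp hq
  obtain ⟨Pmap, hPm⟩ : ∃ P : ℝ → ℝ → ℝ, ∀ σ t, PRel μ σ t (P σ t) :=
    ⟨fun σ t => (hex σ t).choose, fun σ t => (hex σ t).choose_spec⟩
  have hμt : ∀ r : ℝ, Continuous fun t => μ r t :=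
    fun r => hcont.comp (continuous_const.prodMk continuous_id)
  constructor
  · intro σ t
    refine ⟨Pmap σ t, (hiff σ t _).mpr (hPm σ t), ?_⟩
    intro q hq
    exact huniq ((hiff σ t q).mp hq) (hPm σ t)
  · refine ⟨Pmap, ?_, fun σ t => (hiff σ t _).mpr (hPm σ t)⟩
    -- order lemmas for Pmap
    have claim_le_pos : ∀ σ' t' (r : ℝ), 0 ≤ r → σ' < μ r t' → Pmap σ' t' ≤ r := by
      intro σ' t' r hr h
      by_contra hlt
      push_neg at hlt
      rcases hPm σ' t' with ⟨h1, h2⟩ | ⟨h1, h2⟩ | ⟨h1, h2⟩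
      · have h3 : μ r t' < μ (Pmap σ' t') t' :=
          (hmono t') (Set.mem_Ici.mpr hr) (Set.mem_Ici.mpr (hr.trans hlt.le)) hlt
        linarith
      · linarith
      · linarith
    have claim_le_neg : ∀ σ' t' (r : ℝ), r < 0 → σ' < -μ r t' → Pmap σ' t' ≤ r := by
      intro σ' t' r hr h
      by_contra hlt
      push_neg at hlt
      have hr0 : μ (0:ℝ) t' < μ r t' :=
        (hanti t') (Set.mem_Iic.mpr hr.le) (Set.mem_Iic.mpr le_rfl) hr
      rcases hPm σ' t' with ⟨h1, h2⟩ | ⟨h1, h2⟩ | ⟨h1, h2⟩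
      · linarith [hμpos (Pmap σ' t') t', hpos t']
      · have h3 : μ (Pmap σ' t') t' < μ r t' :=
          (hanti t') (Set.mem_Iic.mpr hr.le) (Set.mem_Iic.mpr h1.le) hlt
        linarith
      · have h3 := (abs_le.mp h2).1
        linarith
    have claim_ge_neg : ∀ σ' t' (r : ℝ), r ≤ 0 → -μ r t' < σ' → r ≤ Pmap σ' t' := by
      intro σ' t' r hr h
      by_contra hlt
      push_neg at hlt
      rcases hPm σ' t' with ⟨h1, h2⟩ | ⟨h1, h2⟩ | ⟨h1, h2⟩
      · linarith
      · have h3 : μ r t' < μ (Pmap σ' t') t' :=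
          (hanti t') (Set.mem_Iic.mpr (hlt.le.trans hr)) (Set.mem_Iic.mpr hr) hlt
        linarith
      · linarith
    have claim_ge_pos : ∀ σ' t' (r : ℝ), 0 < r → μ r t' < σ' → r ≤ Pmap σ' t' := by
      intro σ' t' r hr h
      by_contra hlt
      push_neg at hlt
      have hr0 : μ (0:ℝ) t' < μ r t' :=
        (hmono t') (Set.mem_Ici.mpr le_rfl) (Set.mem_Ici.mpr hr.le) hr
      rcases hPm σ' t' with ⟨h1, h2⟩ | ⟨h1, h2⟩ | ⟨h1, h2⟩
      · have h3 : μ (Pmap σ' t') t' < μ r t' :=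
          (hmono t') (Set.mem_Ici.mpr h1.le) (Set.mem_Ici.mpr hr.le) hlt
        linarith
      · linarith [hμpos (Pmap σ' t') t', hpos t']
      · have h3 := le_of_abs_le h2
        linarith
    rw [continuous_iff_continuousAt]
    rintro ⟨σ, t⟩
    rw [ContinuousAt, Metric.tendsto_nhds]
    intro ε hε
    have he0 : 0 < ε / 2 := by positivity
    have keyU : ∀ᶠ q : ℝ × ℝ in nhds (σ, t), Pmap q.1 q.2 ≤ Pmap σ t + ε / 2 := by
      by_cases hc : 0 ≤ Pmap σ t + ε / 2
      · have hσlt : σ < μ (Pmap σ t + ε / 2) t := by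
          rcases hPm σ t with ⟨h1, h2⟩ | ⟨h1, h2⟩ | ⟨h1, h2⟩
          · have h3 : μ (Pmap σ t) t < μ (Pmap σ t + ε / 2) t :=
              (hmono t) (Set.mem_Ici.mpr h1.le) (Set.mem_Ici.mpr hc) (by linarith)
            linarith
          · linarith [hμpos (Pmap σ t + ε / 2) t, hμpos (Pmap σ t) t]
          · have h3 : μ (0:ℝ) t < μ (Pmap σ t + ε / 2) t :=
              (hmono t) (Set.mem_Ici.mpr le_rfl) (Set.mem_Ici.mpr hc) (by linarith)
            linarith [le_abs_self σ]
        have hopen : IsOpen {q : ℝ × ℝ | q.1 < μ (Pmap σ t + ε / 2) q.2} :=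
          isOpen_lt continuous_fst ((hμt (Pmap σ t + ε / 2)).comp continuous_snd)
        filter_upwards [hopen.mem_nhds hσlt] with q hq
        exact claim_le_pos q.1 q.2 _ hc hq
      · push_neg at hc
        have hσlt : σ < -μ (Pmap σ t + ε / 2) t := by
          rcases hPm σ t with ⟨h1, h2⟩ | ⟨h1, h2⟩ | ⟨h1, h2⟩
          · linarith
          · have h3 : μ (Pmap σ t + ε / 2) t < μ (Pmap σ t) t :=
              (hanti t) (Set.mem_Iic.mpr h1.le) (Set.mem_Iic.mpr hc.le) (by linarith)
            linarith
          · linarith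
        have hopen : IsOpen {q : ℝ × ℝ | q.1 < -μ (Pmap σ t + ε / 2) q.2} :=
          isOpen_lt continuous_fst ((hμt (Pmap σ t + ε / 2)).comp continuous_snd).neg
        filter_upwards [hopen.mem_nhds hσlt] with q hq
        exact claim_le_neg q.1 q.2 _ hc hq
    have keyL : ∀ᶠ q : ℝ × ℝ in nhds (σ, t), Pmap σ t - ε / 2 ≤ Pmap q.1 q.2 := by
      by_cases hc : Pmap σ t - ε / 2 ≤ 0
      · have hσgt : -μ (Pmap σ t - ε / 2) t < σ := by
          rcases hPm σ t with ⟨h1, h2⟩ | ⟨h1, h2⟩ | ⟨h1, h2⟩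
          · linarith [hμpos (Pmap σ t - ε / 2) t, hμpos (Pmap σ t) t]
          · have h3 : μ (Pmap σ t) t < μ (Pmap σ t - ε / 2) t :=
              (hanti t) (Set.mem_Iic.mpr hc) (Set.mem_Iic.mpr h1.le) (by linarith)
            linarith
          · have h3 : μ (0:ℝ) t < μ (Pmap σ t - ε / 2) t :=
              (hanti t) (Set.mem_Iic.mpr hc) (Set.mem_Iic.mpr le_rfl) (by linarith)
            linarith [(abs_le.mp h2).1]
        have hopen : IsOpen {q : ℝ × ℝ | -μ (Pmap σ t - ε / 2) q.2 < q.1} :=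
          isOpen_lt ((hμt (Pmap σ t - ε / 2)).comp continuous_snd).neg continuous_fst
        filter_upwards [hopen.mem_nhds hσgt] with q hq
        exact claim_ge_neg q.1 q.2 _ hc hq
      · push_neg at hc
        have hσgt : μ (Pmap σ t - ε / 2) t < σ := by
          rcases hPm σ t with ⟨h1, h2⟩ | ⟨h1, h2⟩ | ⟨h1, h2⟩
          · have h3 : μ (Pmap σ t - ε / 2) t < μ (Pmap σ t) t :=
              (hmono t) (Set.mem_Ici.mpr hc.le) (Set.mem_Ici.mpr h1.le) (by linarith)
            linarith
          · linarith
          · linarith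
        have hopen : IsOpen {q : ℝ × ℝ | μ (Pmap σ t - ε / 2) q.2 < q.1} :=
          isOpen_lt ((hμt (Pmap σ t - ε / 2)).comp continuous_snd) continuous_fst
        filter_upwards [hopen.mem_nhds hσgt] with q hq
        exact claim_ge_pos q.1 q.2 _ hc hq
    filter_upwards [keyU, keyL] with q h1 h2
    rw [Real.dist_eq, abs_lt]
    constructor <;> linarith
end
end

section
/- (Well-posedness of the steady aging map Θ_f.) Let θ∞ > 0, let f0 : ℝ → ℝ be continuous and strictly decreasing with f0(θ∞) = 0, and let f1 : ℝ → ℝ be continuous and strictly increasing with f1(0) = 0. Then for every π ≥ 0 there exists a unique θ ∈ ℝ with f0(θ) = π·f1(θ); this θ lies in the interval (0, θ∞]. The resulting map Θ_f : [0,∞) → ℝ satisfies Θ_f(0) = θ∞ and is strictly decreasing on [0,∞). -/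
open MeasureTheory Set Filter

noncomputable section

/-- well-posedness of the steady aging map `Θ_f`.
If `f0` is continuous and strictly decreasing with `f0(θ∞) = 0` and `f1` is
continuous and strictly increasing with `f1(0) = 0`, then for every `π ≥ 0`
there is a unique `θ` with `f0(θ) = π·f1(θ)`; it lies in `(0, θ∞]`.  The
resulting map `Θ_f` satisfies `Θ_f(0) = θ∞` and is strictly decreasing on
`[0,∞)`. -/
theorem steady_aging_map_wellposed
    (θinf : ℝ) (hθinf : 0 < θinf) (f0 f1 : ℝ → ℝ)
    (hf0c : Continuous f0) (hf0anti : StrictAnti f0) (hf00 : f0 θinf = 0)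
    (hf1c : Continuous f1) (hf1mono : StrictMono f1) (hf10 : f1 0 = 0) :
    ∃ Θf : ℝ → ℝ,
      (∀ p, 0 ≤ p → f0 (Θf p) = p * f1 (Θf p)) ∧
      (∀ p, 0 ≤ p → ∀ t : ℝ, f0 t = p * f1 t → t = Θf p) ∧
      (∀ p, 0 ≤ p → 0 < Θf p ∧ Θf p ≤ θinf) ∧
      Θf 0 = θinf ∧
      StrictAntiOn Θf (Set.Ici 0) := by
  -- auxiliary: g p θ = f0 θ - p * f1 θ is strictly decreasing for p ≥ 0
  have hganti : ∀ p : ℝ, 0 ≤ p → StrictAnti (fun θ => f0 θ - p * f1 θ) := by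
    intro p hp a b hab
    have h1 : f0 b < f0 a := hf0anti hab
    have h2 : p * f1 a ≤ p * f1 b :=
      mul_le_mul_of_nonneg_left (hf1mono hab).le hp
    dsimp only
    linarith
  have hf00pos : 0 < f0 0 := by
    have := hf0anti hθinf
    linarith
  have hf1pos : ∀ t, 0 < t → 0 < f1 t := by
    intro t ht
    have := hf1mono ht
    linarith
  -- existence of root
  have hex : ∀ p : ℝ, 0 ≤ p → ∃ θ, f0 θ = p * f1 θ ∧ 0 < θ ∧ θ ≤ θinf := by
    intro p hp
    set g : ℝ → ℝ := fun θ => f0 θ - p * f1 θ with hg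
    have hgc : Continuous g := hf0c.sub (continuous_const.mul hf1c)
    have hg0 : 0 < g 0 := by simp [hg, hf10, hf00pos]
    have hgi : g θinf ≤ 0 := by
      have : 0 ≤ p * f1 θinf := mul_nonneg hp (hf1pos θinf hθinf).le
      simp only [hg, hf00]; linarith
    have hmem : (0:ℝ) ∈ Icc (g θinf) (g 0) := ⟨hgi, hg0.le⟩
    obtain ⟨θ, hθmem, hθ⟩ := intermediate_value_Icc' hθinf.le hgc.continuousOn hmem
    refine ⟨θ, by simpa [hg, sub_eq_zero] using hθ, ?_, hθmem.2⟩
    rcases hθmem.1.lt_or_eq with h | h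
    · exact h
    · exfalso; rw [← h] at hθ; linarith
  classical
  choose Θ hΘ using hex
  refine ⟨fun p => if h : 0 ≤ p then Θ p h else θinf, ?_, ?_, ?_, ?_, ?_⟩
  · intro p hp; simp only [dif_pos hp]; exact (hΘ p hp).1
  · intro p hp t ht
    simp only [dif_pos hp]
    have := (hganti p hp).injective (a₁ := t) (a₂ := Θ p hp)
    apply this
    simp only [(hΘ p hp).1, ht, sub_self]
  · intro p hp; simp only [dif_pos hp]; exact (hΘ p hp).2
  · have h0 : (0:ℝ) ≤ 0 := le_refl 0
    simp only [dif_pos h0]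
    have := (hganti 0 h0).injective (a₁ := Θ 0 h0) (a₂ := θinf)
    apply this
    simp [(hΘ 0 h0).1, hf00]
  · intro p hp q hq hpq
    simp only [mem_Ici] at hp hq
    simp only [dif_pos hp, dif_pos hq]
    by_contra hle
    push_neg at hle
    -- Θ p ≤ Θ q ; evaluate g_p at Θ q
    have hgpq : f0 (Θ q hq) - p * f1 (Θ q hq) > 0 := by
      have hq1 : f0 (Θ q hq) = q * f1 (Θ q hq) := (hΘ q hq).1
      have hpos : 0 < f1 (Θ q hq) := hf1pos _ (hΘ q hq).2.1
      nlinarith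
    have : f0 (Θ q hq) - p * f1 (Θ q hq) ≤ f0 (Θ p hp) - p * f1 (Θ p hp) :=
      (hganti p hp).antitone hle
    have hp1 : f0 (Θ p hp) = p * f1 (Θ p hp) := (hΘ p hp).1
    linarith
end
end

section
/- (Existence and uniqueness of the critical plastic rate π*.) Let π∘ > 0 and let μ̃ : [0,∞) → (0,∞) be continuous, strictly decreasing on [0, π∘], strictly increasing on [π∘, ∞), and satisfy μ̃(π) → ∞ as π → ∞. Then there exists a unique π* > π∘ such that ∫₀^{π*} μ̃(s) ds = π*·μ̃(π*). -/
open MeasureTheory Set Filter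

noncomputable section

/-- existence and uniqueness of the critical plastic rate
`π*`.  If `μ̃ : [0,∞) → (0,∞)` is continuous, strictly decreasing on
`[0, π∘]`, strictly increasing on `[π∘, ∞)` and tends to `∞`, then there is a
unique `π* > π∘` with `∫₀^{π*} μ̃(s) ds = π*·μ̃(π*)`. -/
theorem critical_plastic_rate_exists_unique
    (pc : ℝ) (hpc : 0 < pc) (mu : ℝ → ℝ)
    (hc : ContinuousOn mu (Set.Ici 0))
    (hpos : ∀ p, 0 ≤ p → 0 < mu p)
    (hanti : StrictAntiOn mu (Set.Icc 0 pc))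
    (hmono : StrictMonoOn mu (Set.Ici pc))
    (htop : Tendsto mu atTop atTop) :
    ∃! ps : ℝ, pc < ps ∧ (∫ s in (0:ℝ)..ps, mu s) = ps * mu ps := by
  -- integrability on subintervals of [0,∞)
  have hInt : ∀ a b : ℝ, 0 ≤ a → 0 ≤ b → IntervalIntegrable mu volume a b := by
    intro a b ha hb
    refine (hc.mono ?_).intervalIntegrable
    intro x hx
    rcases Set.mem_uIcc.mp hx with h | h
    · exact le_trans ha h.1
    · exact le_trans hb h.1
  -- key strict integral inequality: for pc ≤ p1 < p2, ∫_{p1}^{p2} mu < (p2 - p1) * mu p2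
  have key : ∀ p1 p2 : ℝ, pc ≤ p1 → p1 < p2 →
      (∫ s in p1..p2, mu s) < (p2 - p1) * mu p2 := by
    intro p1 p2 h1 h12
    have h1' : (0:ℝ) ≤ p1 := hpc.le.trans h1
    have h2' : (0:ℝ) ≤ p2 := h1'.trans h12.le
    have hpos' : 0 < ∫ s in p1..p2, (mu p2 - mu s) := by
      refine intervalIntegral.intervalIntegral_pos_of_pos_on
        (((intervalIntegrable_const).sub (hInt p1 p2 h1' h2'))) ?_ h12
      intro x hx
      have : mu x < mu p2 := hmono (le_trans h1 hx.1.le) (h1.trans h12.le) hx.2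
      linarith
    have heq := intervalIntegral.integral_sub (intervalIntegrable_const (c := mu p2))
      (hInt p1 p2 h1' h2')
    rw [heq, intervalIntegral.integral_const, smul_eq_mul] at hpos'
    linarith
  -- F
  set F : ℝ → ℝ := fun p => (∫ s in (0:ℝ)..p, mu s) - p * mu p with hF
  -- F pc > 0
  have hFpc : 0 < F pc := by
    have hpos' : 0 < ∫ s in (0:ℝ)..pc, (mu s - mu pc) := by
      refine intervalIntegral.intervalIntegral_pos_of_pos_on
        ((hInt 0 pc le_rfl hpc.le).sub intervalIntegrable_const) ?_ hpc
      intro x hx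
      have : mu pc < mu x := hanti ⟨hx.1.le, hx.2.le⟩ ⟨hpc.le, le_rfl⟩ hx.2
      linarith
    have heq := intervalIntegral.integral_sub (hInt 0 pc le_rfl hpc.le)
      (intervalIntegrable_const (c := mu pc))
    rw [heq, intervalIntegral.integral_const, smul_eq_mul] at hpos'
    simp only [hF]
    linarith
  -- choose big P with mu P large
  obtain ⟨P₀, hP₀⟩ := (htop.eventually_ge_atTop ((∫ s in (0:ℝ)..pc, mu s) / pc + 1)).exists_forall_of_atTop
  set P : ℝ := max P₀ (pc + 1) with hPdef
  have hPpc : pc < P := lt_of_lt_of_le (by linarith) (le_max_right _ _)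
  have hmuP : (∫ s in (0:ℝ)..pc, mu s) / pc + 1 ≤ mu P := hP₀ P (le_max_left _ _)
  have hFP : F P < 0 := by
    have hsplit : (∫ s in (0:ℝ)..P, mu s)
        = (∫ s in (0:ℝ)..pc, mu s) + ∫ s in pc..P, mu s :=
      (intervalIntegral.integral_add_adjacent_intervals (hInt 0 pc le_rfl hpc.le)
        (hInt pc P hpc.le (hpc.le.trans hPpc.le))).symm
    have h2 := key pc P le_rfl hPpc
    have h3 : (∫ s in (0:ℝ)..pc, mu s) < pc * mu P := by
      have : (∫ s in (0:ℝ)..pc, mu s) / pc < mu P := by linarith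
      calc (∫ s in (0:ℝ)..pc, mu s) = ((∫ s in (0:ℝ)..pc, mu s) / pc) * pc := by
            field_simp
        _ < mu P * pc := by exact mul_lt_mul_of_pos_right this hpc
        _ = pc * mu P := mul_comm _ _
    simp only [hF]
    rw [hsplit]
    nlinarith
  -- continuity of F on [pc, P]
  have hFcont : ContinuousOn F (Set.Icc pc P) := by
    have h1 : ContinuousOn (fun p => ∫ s in (0:ℝ)..p, mu s) (Set.Icc pc P) := by
      have := intervalIntegral.continuousOn_primitive_interval'
        (μ := volume) (f := mu) (b₁ := 0) (b₂ := P) (a := 0)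
        (hInt 0 P le_rfl (hpc.le.trans hPpc.le))
        (by rw [Set.uIcc_of_le (hpc.le.trans hPpc.le)]; exact ⟨le_rfl, hpc.le.trans hPpc.le⟩)
      refine this.mono ?_
      rw [Set.uIcc_of_le (hpc.le.trans hPpc.le)]
      exact Set.Icc_subset_Icc hpc.le le_rfl
    have h2 : ContinuousOn (fun p => p * mu p) (Set.Icc pc P) := by
      refine (continuousOn_id.mul (hc.mono ?_))
      exact fun x hx => hpc.le.trans hx.1
    exact h1.sub h2
  -- IVT
  obtain ⟨ps, hpsmem, hps0⟩ : ∃ ps ∈ Set.Icc pc P, F ps = 0 := by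
    have := intermediate_value_Icc' hPpc.le hFcont (a := pc) (b := P)
    have h0 : (0:ℝ) ∈ Set.Icc (F P) (F pc) := ⟨hFP.le, hFpc.le⟩
    obtain ⟨x, hx, hx0⟩ := this h0
    exact ⟨x, hx, hx0⟩
  have hpsgt : pc < ps := by
    rcases lt_or_eq_of_le hpsmem.1 with h | h
    · exact h
    · exfalso; rw [← h] at hps0; rw [hps0] at hFpc; exact lt_irrefl 0 hFpc
  refine ⟨ps, ⟨hpsgt, by simpa [hF, sub_eq_zero] using hps0⟩, ?_⟩
  -- uniqueness
  have uniq : ∀ p1 p2 : ℝ, pc < p1 → pc < p2 →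
      (∫ s in (0:ℝ)..p1, mu s) = p1 * mu p1 →
      (∫ s in (0:ℝ)..p2, mu s) = p2 * mu p2 → ¬ (p1 < p2) := by
    intro p1 p2 h1 h2 e1 e2 h12
    have h1' : (0:ℝ) ≤ p1 := hpc.le.trans h1.le
    have h2' : (0:ℝ) ≤ p2 := hpc.le.trans h2.le
    have hsplit : (∫ s in (0:ℝ)..p2, mu s)
        = (∫ s in (0:ℝ)..p1, mu s) + ∫ s in p1..p2, mu s :=
      (intervalIntegral.integral_add_adjacent_intervals (hInt 0 p1 le_rfl h1')
        (hInt p1 p2 h1' h2')).symm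
    have hk := key p1 p2 h1.le h12
    have hmu : mu p1 < mu p2 := hmono h1.le (h1.le.trans h12.le) h12
    nlinarith
  intro q hq
  by_contra hne
  rcases lt_or_gt_of_ne hne with h | h
  · exact uniq q ps hq.1 hpsgt hq.2 (by simpa [hF, sub_eq_zero] using hps0) h
  · exact uniq ps q hpsgt hq.1 (by simpa [hF, sub_eq_zero] using hps0) hq.2 h
end
end

section
/- (Convex envelope of the dissipation function.) Let π∘ > 0 and let μ̃ : [0,∞) → (0,∞) be continuous, strictly decreasing on [0, π∘], strictly increasing on [π∘, ∞), with μ̃(π) → ∞ as π → ∞; let π* > π∘ be the unique number with ∫₀^{π*} μ̃(s) ds = π*·μ̃(π*). Define R(π) = ∫₀^{π} μ̃(s) ds for π ≥ 0 and define G : [0,∞) → ℝ by G(π) = μ̃(π*)·π for 0 ≤ π ≤ π* and G(π) = R(π) for π ≥ π*. Then: (a) G is convex on [0,∞); (b) G(π) ≤ R(π) for all π ≥ 0, with strict inequality G(π) < R(π) for every π ∈ (0, π*); and (c) for every convex function g : [0,∞) → ℝ with g(π) ≤ R(π) for all π ≥ 0 one has g(π) ≤ G(π) for all π ≥ 0 (i.e.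 G is the convex envelope R** of R on [0,∞)). -/
open MeasureTheory Set Filter
open Topology

noncomputable section

/-- convex envelope of the dissipation function.
With `R(π) = ∫₀^π μ̃` and `G` equal to `μ̃(π*)·π` on `[0,π*]` and to `R` on
`[π*,∞)`, the function `G` is convex on `[0,∞)`, satisfies `G ≤ R` on `[0,∞)`
with strict inequality on `(0,π*)`, and is the largest convex function below
`R` on `[0,∞)` (i.e. the convex envelope `R**`). -/
theorem convex_envelope_of_dissipation
    (pc ps : ℝ) (hpc : 0 < pc) (mu R G : ℝ → ℝ)
    (hc : ContinuousOn mu (Set.Ici 0))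
    (hpos : ∀ p, 0 ≤ p → 0 < mu p)
    (hanti : StrictAntiOn mu (Set.Icc 0 pc))
    (hmono : StrictMonoOn mu (Set.Ici pc))
    (htop : Tendsto mu atTop atTop)
    (hps : pc < ps) (hps_eq : (∫ s in (0:ℝ)..ps, mu s) = ps * mu ps)
    (hR : ∀ p, R p = ∫ s in (0:ℝ)..p, mu s)
    (hG1 : ∀ p ∈ Set.Icc (0:ℝ) ps, G p = mu ps * p)
    (hG2 : ∀ p, ps ≤ p → G p = R p) :
    ConvexOn ℝ (Set.Ici 0) G ∧
    (∀ p, 0 ≤ p → G p ≤ R p) ∧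
    (∀ p ∈ Set.Ioo 0 ps, G p < R p) ∧
    (∀ g : ℝ → ℝ, ConvexOn ℝ (Set.Ici 0) g → (∀ p, 0 ≤ p → g p ≤ R p) →
      ∀ p, 0 ≤ p → g p ≤ G p) := by
  have hps0 : (0:ℝ) < ps := hpc.trans hps
  have hRfun : R = fun p => ∫ s in (0:ℝ)..p, mu s := funext hR
  subst hRfun
  -- integrability
  have hint : ∀ x y : ℝ, 0 ≤ x → 0 ≤ y → IntervalIntegrable mu volume x y := by
    intro x y hx hy
    apply ContinuousOn.intervalIntegrable
    apply hc.mono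
    intro s hs
    exact le_trans (le_min hx hy) hs.1
  have hR0 : (∫ s in (0:ℝ)..(0:ℝ), mu s) = 0 := intervalIntegral.integral_same
  -- continuity of mu at positive points
  have hcmu : ∀ p : ℝ, 0 < p → ContinuousAt mu p := fun p hp =>
    hc.continuousAt (Ici_mem_nhds hp)
  -- FTC
  have hRderiv : ∀ p : ℝ, 0 < p →
      HasDerivAt (fun u => ∫ s in (0:ℝ)..u, mu s) (mu p) p := by
    intro p hp
    exact intervalIntegral.integral_hasDerivAt_right (hint 0 p le_rfl hp.le)
      ((hc.mono Ioi_subset_Ici_self).stronglyMeasurableAtFilter isOpen_Ioi p hp)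
      (hcmu p hp)
  -- the would-be derivative of G
  set h : ℝ → ℝ := fun s => if s ≤ ps then mu ps else mu s with hh
  have hderiv : ∀ p : ℝ, 0 < p → HasDerivAt G (h p) p := by
    intro p hp
    rcases lt_trichotomy p ps with hlt | heq | hgt
    · have hmem : Ioo (0:ℝ) ps ∈ 𝓝 p := isOpen_Ioo.mem_nhds ⟨hp, hlt⟩
      have heq : G =ᶠ[𝓝 p] fun x => mu ps * x :=
        eventuallyEq_of_mem hmem (fun x hx => hG1 x ⟨hx.1.le, hx.2.le⟩)
      have : HasDerivAt (fun x => mu ps * x) (mu ps) p := by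
        simpa using (hasDerivAt_id p).const_mul (mu ps)
      have := this.congr_of_eventuallyEq heq
      simpa [hh, if_pos hlt.le] using this
    · subst heq
      have hIic : HasDerivWithinAt G (mu p) (Iic p) p := by
        have h0 : HasDerivAt (fun x => mu p * x) (mu p) p := by
          simpa using (hasDerivAt_id p).const_mul (mu p)
        have h1 : HasDerivWithinAt (fun x => mu p * x) (mu p) (Icc 0 p) p :=
          h0.hasDerivWithinAt
        have h2 : HasDerivWithinAt G (mu p) (Icc 0 p) p :=
          h1.congr (fun y hy => hG1 y hy) (hG1 p ⟨hp.le, le_rfl⟩)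
        apply h2.mono_of_mem_nhdsWithin
        have : Ici (0:ℝ) ∩ Iic p ∈ 𝓝[Iic p] p :=
          Filter.inter_mem (mem_nhdsWithin_of_mem_nhds (Ici_mem_nhds hp))
            self_mem_nhdsWithin
        simpa [Ici_inter_Iic] using this
      have hIci : HasDerivWithinAt G (mu p) (Ici p) p := by
        have h2 : HasDerivWithinAt G (mu p)
            (Ici p) p :=
          ((hRderiv p hp).hasDerivWithinAt).congr
            (fun y hy => hG2 y hy) (hG2 p le_rfl)
        exact h2
      have := hIic.union hIci
      rw [Iic_union_Ici] at this
      simpa [hh] using hasDerivWithinAt_univ.mp this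
    · have hmem : Ioi ps ∈ 𝓝 p := isOpen_Ioi.mem_nhds hgt
      have heq : G =ᶠ[𝓝 p] fun u => ∫ s in (0:ℝ)..u, mu s :=
        eventuallyEq_of_mem hmem (fun x hx => hG2 x (le_of_lt hx))
      have := (hRderiv p hp).congr_of_eventuallyEq heq
      simpa [hh, if_neg (not_le.mpr hgt)] using this
  -- convexity of G
  have hconvG : ConvexOn ℝ (Set.Ici 0) G := by
    apply MonotoneOn.convexOn_of_deriv (convex_Ici 0)
    · -- continuity
      intro x hx
      rcases eq_or_lt_of_le (mem_Ici.mp hx : (0:ℝ) ≤ x) with hx0 | hx0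
      · have hmem : Ici (0:ℝ) ∩ Iic ps ∈ 𝓝[Ici 0] (0:ℝ) :=
          Filter.inter_mem self_mem_nhdsWithin
            (mem_nhdsWithin_of_mem_nhds (Iic_mem_nhds hps0))
        rw [← hx0]
        have hcw : ContinuousWithinAt (fun y => mu ps * y) (Ici 0) (0:ℝ) :=
          (continuous_const.mul continuous_id).continuousWithinAt
        apply hcw.congr_of_eventuallyEq
        · refine eventuallyEq_of_mem hmem (fun y hy => ?_)
          exact hG1 y ⟨hy.1, hy.2⟩
        · simpa using hG1 0 ⟨le_rfl, hps0.le⟩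
      · exact (hderiv x hx0).continuousAt.continuousWithinAt
    · rw [interior_Ici]
      intro x hx
      exact (hderiv x hx).differentiableAt.differentiableWithinAt
    · rw [interior_Ici]
      intro a ha b hb hab
      rw [(hderiv a ha).deriv, (hderiv b hb).deriv]
      simp only [hh]
      rcases le_or_gt b ps with hb' | hb'
      · rw [if_pos hb', if_pos (hab.trans hb')]
      · rw [if_neg (not_le.mpr hb')]
        rcases le_or_gt a ps with ha' | ha'
        · rw [if_pos ha']
          exact (hmono (le_of_lt hps) (hps.le.trans hb'.le) hb').le
        · rw [if_neg (not_le.mpr ha')]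
          exact hmono.monotoneOn (mem_Ici.mpr (hps.le.trans ha'.le))
            (mem_Ici.mpr (hps.le.trans (ha'.trans_le hab).le)) hab
  -- strict inequality on (0, ps)
  have hstrict : ∀ p ∈ Set.Ioo (0:ℝ) ps, G p < ∫ s in (0:ℝ)..p, mu s := by
    rintro p ⟨hp0, hpps⟩
    rw [hG1 p ⟨hp0.le, hpps.le⟩]
    rcases le_or_gt (mu ps) (mu p) with hcase | hcase
    · -- then p ≤ pc and mu > mu ps on (0, p)
      have hppc : p ≤ pc := by
        by_contra hcon
        push_neg at hcon
        exact absurd (hmono (le_of_lt hcon) hps.le hpps) (not_lt.mpr hcase)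
      have hposint : 0 < ∫ s in (0:ℝ)..p, (mu s - mu ps) := by
        apply intervalIntegral.intervalIntegral_pos_of_pos_on
        · exact (hint 0 p le_rfl hp0.le).sub intervalIntegrable_const
        · intro x hx
          have : mu p < mu x := hanti ⟨hx.1.le, (hx.2.le.trans hppc)⟩ ⟨hp0.le, hppc⟩ hx.2
          linarith
        · exact hp0
      have : (∫ s in (0:ℝ)..p, (mu s - mu ps))
          = (∫ s in (0:ℝ)..p, mu s) - p * mu ps := by
        rw [intervalIntegral.integral_sub (hint 0 p le_rfl hp0.le)
          intervalIntegrable_const, intervalIntegral.integral_const]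
        simp [smul_eq_mul]
      rw [this] at hposint
      linarith
    · -- mu < mu ps on (p, ps)
      have hposint : 0 < ∫ s in p..ps, (mu ps - mu s) := by
        apply intervalIntegral.intervalIntegral_pos_of_pos_on
        · exact (intervalIntegrable_const).sub (hint p ps hp0.le hps0.le)
        · intro x hx
          rcases le_or_gt pc x with hxpc | hxpc
          · have : mu x < mu ps := hmono hxpc (hxpc.trans hx.2.le) hx.2
            linarith
          · have h1 : mu x < mu p :=
              hanti ⟨hp0.le, (hx.1.le.trans hxpc.le)⟩ ⟨(hp0.trans hx.1).le, hxpc.le⟩ hx.1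
            linarith
        · exact hpps
      have hsplit : (∫ s in (0:ℝ)..p, mu s) + (∫ s in p..ps, mu s)
          = ∫ s in (0:ℝ)..ps, mu s :=
        intervalIntegral.integral_add_adjacent_intervals (hint 0 p le_rfl hp0.le)
          (hint p ps hp0.le hps0.le)
      have : (∫ s in p..ps, (mu ps - mu s))
          = (ps - p) * mu ps - ∫ s in p..ps, mu s := by
        rw [intervalIntegral.integral_sub intervalIntegrable_const
          (hint p ps hp0.le hps0.le), intervalIntegral.integral_const]
        simp [smul_eq_mul]
      rw [this] at hposint
      have := hps_eq
      linarith
  refine ⟨hconvG, ?_, hstrict, ?_⟩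
  · -- G ≤ R
    intro p hp
    rcases eq_or_lt_of_le hp with h0 | h0
    · rw [← h0]
      simp [hG1 0 ⟨le_rfl, hps0.le⟩]
    rcases lt_or_ge p ps with h1 | h1
    · exact (hstrict p ⟨h0, h1⟩).le
    · rw [hG2 p h1]
  · -- maximality
    intro g hg hgR p hp
    rcases le_or_gt ps p with h1 | h1
    · rw [hG2 p h1]; exact hgR p hp
    · have ha : (0:ℝ) ≤ (ps - p)/ps := div_nonneg (by linarith) hps0.le
      have hb : (0:ℝ) ≤ p/ps := div_nonneg hp hps0.le
      have hab : (ps - p)/ps + p/ps = 1 := by field_simp; ring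
      have hcomb := hg.2 (mem_Ici.mpr le_rfl) (mem_Ici.mpr hps0.le) ha hb hab
      simp only [smul_eq_mul] at hcomb
      have hpt : ((ps - p)/ps) * (0:ℝ) + (p/ps) * ps = p := by
        field_simp; ring
      rw [hpt] at hcomb
      have hg0 : g 0 ≤ 0 := by simpa using hgR 0 le_rfl
      have hgps : g ps ≤ ps * mu ps := by simpa [hps_eq] using hgR ps hps0.le
      have hGp : G p = mu ps * p := hG1 p ⟨hp, h1.le⟩
      rw [hGp]
      calc g p ≤ ((ps - p)/ps) * g 0 + (p/ps) * g ps := hcomb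
        _ ≤ ((ps - p)/ps) * 0 + (p/ps) * (ps * mu ps) := by
            apply add_le_add
            · exact mul_le_mul_of_nonneg_left hg0 ha
            · exact mul_le_mul_of_nonneg_left hgps hb
        _ = mu ps * p := by field_simp; ring
end
end

section
/- (Relaxation lower bound for the constrained dissipation minimization.) Let π∘ > 0 and μ̃ : [0,∞) → (0,∞) be continuous, strictly decreasing on [0, π∘], strictly increasing on [π∘, ∞), with μ̃(π) → ∞ as π → ∞; let π* > π∘ satisfy ∫₀^{π*} μ̃ = π*·μ̃(π*); set R(π) = ∫₀^{π} μ̃(s) ds and let G be its convex envelope, given by G(π) = μ̃(π*)·π on [0, π*] and G(π) = R(π) for π ≥ π*. Let H > 0 and v∞ > 0. Then for every Lebesgue-measurable function π : [−H,H] → [0,∞) with ∫_{−H}^{H} π(x) dx = 2 v∞ one has ∫_{−H}^{H} R(π(x)) dx ≥ 2H·G(v∞/H). -/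
open MeasureTheory Set Filter

noncomputable section

private lemma muInt (mu : ℝ → ℝ) (hc : ContinuousOn mu (Set.Ici 0))
    {a b : ℝ} (ha : 0 ≤ a) (hab : a ≤ b) :
    IntervalIntegrable mu volume a b := by
  apply ContinuousOn.intervalIntegrable
  apply hc.mono
  rw [Set.uIcc_of_le hab]
  exact fun x hx => le_trans ha hx.1

private lemma int_ge (mu : ℝ → ℝ) (hc : ContinuousOn mu (Set.Ici 0))
    {a b c : ℝ} (ha : 0 ≤ a) (hab : a ≤ b)
    (h : ∀ s ∈ Set.Icc a b, c ≤ mu s) :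
    c * (b - a) ≤ ∫ s in a..b, mu s := by
  have h1 : (∫ _ in a..b, c) ≤ ∫ s in a..b, mu s :=
    intervalIntegral.integral_mono_on hab intervalIntegrable_const (muInt mu hc ha hab) h
  rwa [intervalIntegral.integral_const, smul_eq_mul, mul_comm] at h1

private lemma int_le (mu : ℝ → ℝ) (hc : ContinuousOn mu (Set.Ici 0))
    {a b c : ℝ} (ha : 0 ≤ a) (hab : a ≤ b)
    (h : ∀ s ∈ Set.Icc a b, mu s ≤ c) :
    (∫ s in a..b, mu s) ≤ c * (b - a) := by
  have h1 : (∫ s in a..b, mu s) ≤ ∫ _ in a..b, c :=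
    intervalIntegral.integral_mono_on hab (muInt mu hc ha hab) intervalIntegrable_const h
  rwa [intervalIntegral.integral_const, smul_eq_mul, mul_comm] at h1

private lemma Rsplit (mu : ℝ → ℝ) (hc : ContinuousOn mu (Set.Ici 0))
    {a b : ℝ} (ha : 0 ≤ a) (hab : a ≤ b) :
    (∫ s in (0:ℝ)..a, mu s) + (∫ s in a..b, mu s) = ∫ s in (0:ℝ)..b, mu s :=
  intervalIntegral.integral_add_adjacent_intervals (muInt mu hc le_rfl ha)
    (muInt mu hc ha hab)

/-- Key fact: `R p ≥ mu ps * p` for `p ≥ 0`. -/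
private lemma lemA (pc ps : ℝ) (hpc : 0 < pc) (mu R : ℝ → ℝ)
    (hc : ContinuousOn mu (Set.Ici 0))
    (hanti : StrictAntiOn mu (Set.Icc 0 pc))
    (hmono : StrictMonoOn mu (Set.Ici pc))
    (hps : pc < ps) (hps_eq : (∫ s in (0:ℝ)..ps, mu s) = ps * mu ps)
    (hR : ∀ p, R p = ∫ s in (0:ℝ)..p, mu s) :
    ∀ p, 0 ≤ p → mu ps * p ≤ R p := by
  have hRps : R ps = ps * mu ps := by rw [hR]; exact hps_eq
  have hpsnn : (0:ℝ) ≤ ps := le_trans hpc.le hps.le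
  -- middle range first
  have mid : ∀ p, pc ≤ p → p ≤ ps → mu ps * p ≤ R p := by
    intro p h1 h2
    have hpnn : (0:ℝ) ≤ p := le_trans hpc.le h1
    have hs : (∫ s in p..ps, mu s) ≤ mu ps * (ps - p) := by
      apply int_le mu hc hpnn h2
      intro s hs
      exact hmono.monotoneOn (Set.mem_Ici.2 (le_trans h1 hs.1)) (Set.mem_Ici.2 hps.le) hs.2
    have hsp := Rsplit mu hc hpnn h2
    rw [← hR, ← hR] at hsp
    nlinarith
  intro p hp
  rcases le_or_gt ps p with h | h
  · -- p ≥ ps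
    have hs : mu ps * (p - ps) ≤ ∫ s in ps..p, mu s := by
      apply int_ge mu hc hpsnn h
      intro s hs
      exact hmono.monotoneOn (Set.mem_Ici.2 hps.le) (Set.mem_Ici.2 (le_trans hps.le hs.1)) hs.1
    have hsp := Rsplit mu hc hpsnn h
    rw [← hR, ← hR] at hsp
    nlinarith
  rcases le_or_gt pc p with h1 | h1
  · exact mid p h1 h.le
  -- p ∈ [0, pc]
  have hpc_ge : mu ps * pc ≤ R pc := mid pc le_rfl hps.le
  rcases le_or_gt (mu ps) (mu p) with ht | ht
  · -- use lower chord on [0,p]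
    have hs : mu p * (p - 0) ≤ ∫ s in (0:ℝ)..p, mu s := by
      apply int_ge mu hc le_rfl hp
      intro s hs
      exact hanti.antitoneOn ⟨hs.1, le_trans hs.2 h1.le⟩ ⟨hp, h1.le⟩ hs.2
    rw [← hR] at hs
    nlinarith
  · -- use upper chord on [p, pc]
    have hs : (∫ s in p..pc, mu s) ≤ mu p * (pc - p) := by
      apply int_le mu hc hp h1.le
      intro s hs
      exact hanti.antitoneOn ⟨hp, h1.le⟩ ⟨le_trans hp hs.1, hs.2⟩ hs.1
    have hsp := Rsplit mu hc hp h1.le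
    rw [← hR, ← hR] at hsp
    nlinarith

/-- Supporting line at `p0 ≥ ps`. -/
private lemma lemB (pc ps : ℝ) (hpc : 0 < pc) (mu R : ℝ → ℝ)
    (hc : ContinuousOn mu (Set.Ici 0))
    (hanti : StrictAntiOn mu (Set.Icc 0 pc))
    (hmono : StrictMonoOn mu (Set.Ici pc))
    (hps : pc < ps) (hps_eq : (∫ s in (0:ℝ)..ps, mu s) = ps * mu ps)
    (hR : ∀ p, R p = ∫ s in (0:ℝ)..p, mu s) {p0 : ℝ} (hp0 : ps ≤ p0) :
    ∀ p, 0 ≤ p → R p0 + mu p0 * (p - p0) ≤ R p := by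
  have hpsnn : (0:ℝ) ≤ ps := le_trans hpc.le hps.le
  have hp0nn : (0:ℝ) ≤ p0 := le_trans hpsnn hp0
  have hmu_le : mu ps ≤ mu p0 := hmono.monotoneOn (Set.mem_Ici.2 hps.le) (Set.mem_Ici.2 (le_trans hps.le hp0)) hp0
  have mid : ∀ p, ps ≤ p → p ≤ p0 → R p0 + mu p0 * (p - p0) ≤ R p := by
    intro p h1 h2
    have hpnn : (0:ℝ) ≤ p := le_trans hpsnn h1
    have hs : (∫ s in p..p0, mu s) ≤ mu p0 * (p0 - p) := by
      apply int_le mu hc hpnn h2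
      intro s hs
      exact hmono.monotoneOn (Set.mem_Ici.2 (le_trans hps.le (le_trans h1 hs.1))) (Set.mem_Ici.2 (le_trans hps.le hp0)) hs.2
    have hsp := Rsplit mu hc hpnn h2
    rw [← hR, ← hR] at hsp
    nlinarith
  intro p hp
  rcases le_or_gt p0 p with h | h
  · have hs : mu p0 * (p - p0) ≤ ∫ s in p0..p, mu s := by
      apply int_ge mu hc hp0nn h
      intro s hs
      exact hmono.monotoneOn (Set.mem_Ici.2 (le_trans hps.le hp0)) (Set.mem_Ici.2 (le_trans (le_trans hps.le hp0) hs.1)) hs.1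
    have hsp := Rsplit mu hc hp0nn h
    rw [← hR, ← hR] at hsp
    nlinarith
  rcases le_or_gt ps p with h1 | h1
  · exact mid p h1 h.le
  · -- p ≤ ps : use lemA plus the value at ps
    have hA := lemA pc ps hpc mu R hc hanti hmono hps hps_eq hR p hp
    have hmid := mid ps le_rfl hp0
    have hRps : R ps = ps * mu ps := by rw [hR]; exact hps_eq
    nlinarith [mul_nonneg (sub_nonneg.2 hmu_le) (sub_nonneg.2 h1.le)]

/-- relaxation lower bound for the constrained dissipation
minimization.  With `R(π) = ∫₀^π μ̃` and `G` its convex envelope (equal to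
`μ̃(π*)·π` on `[0,π*]` and to `R` on `[π*,∞)`), every measurable
`π : [-H,H] → [0,∞)` with `∫_{-H}^H π = 2 v∞` satisfies
`∫_{-H}^H R(π(x)) dx ≥ 2H·G(v∞/H)` (integrals in `[0,∞]`). -/
theorem dissipation_relaxation_lower_bound
    (pc ps : ℝ) (hpc : 0 < pc) (mu R G : ℝ → ℝ)
    (hc : ContinuousOn mu (Set.Ici 0))
    (hpos : ∀ p, 0 ≤ p → 0 < mu p)
    (hanti : StrictAntiOn mu (Set.Icc 0 pc))
    (hmono : StrictMonoOn mu (Set.Ici pc))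
    (htop : Tendsto mu atTop atTop)
    (hps : pc < ps) (hps_eq : (∫ s in (0:ℝ)..ps, mu s) = ps * mu ps)
    (hR : ∀ p, R p = ∫ s in (0:ℝ)..p, mu s)
    (hG1 : ∀ p ∈ Set.Icc (0:ℝ) ps, G p = mu ps * p)
    (hG2 : ∀ p, ps ≤ p → G p = R p)
    (H vinf : ℝ) (hH : 0 < H) (hv : 0 < vinf)
    (π : ℝ → ℝ)
    (hmeas : AEMeasurable π (volume.restrict (Set.Icc (-H) H)))
    (hnn : ∀ x ∈ Set.Icc (-H) H, 0 ≤ π x)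
    (hconstraint : (∫⁻ x in Set.Icc (-H) H, ENNReal.ofReal (π x))
      = ENNReal.ofReal (2 * vinf)) :
    ENNReal.ofReal (2 * H * G (vinf / H))
      ≤ ∫⁻ x in Set.Icc (-H) H, ENNReal.ofReal (R (π x)) := by
  set p0 : ℝ := vinf / H with hp0def
  have hp0pos : 0 < p0 := div_pos hv hH
  -- choose a supporting line a*p + b ≤ R p with a*(2 vinf) + 2H*b = 2H * G p0
  obtain ⟨a, b, key1, key2⟩ :
      ∃ a b : ℝ, (∀ p, 0 ≤ p → a * p + b ≤ R p) ∧
        a * (2 * vinf) + 2 * H * b = 2 * H * G p0 := by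
    rcases le_or_gt p0 ps with h | h
    · refine ⟨mu ps, 0, fun p hp => ?_, ?_⟩
      · have := lemA pc ps hpc mu R hc hanti hmono hps hps_eq hR p hp
        linarith
      · rw [hG1 p0 ⟨hp0pos.le, h⟩, hp0def]
        have hHne : H ≠ 0 := hH.ne'
        field_simp
        ring
    · refine ⟨mu p0, R p0 - mu p0 * p0, fun p hp => ?_, ?_⟩
      · have := lemB pc ps hpc mu R hc hanti hmono hps hps_eq hR h.le p hp
        linarith
      · rw [hG2 p0 h.le]
        have hHne : H ≠ 0 := hH.ne'
        rw [hp0def]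
        field_simp
        ring
  -- measure-theoretic part
  have hnn_ae : 0 ≤ᵐ[volume.restrict (Set.Icc (-H) H)] π :=
    (ae_restrict_mem measurableSet_Icc).mono fun x hx => hnn x hx
  have hπint : Integrable π (volume.restrict (Set.Icc (-H) H)) := by
    refine ⟨hmeas.aestronglyMeasurable, ?_⟩
    rw [MeasureTheory.hasFiniteIntegral_iff_norm]
    have : (∫⁻ x in Set.Icc (-H) H, ENNReal.ofReal ‖π x‖)
        = ∫⁻ x in Set.Icc (-H) H, ENNReal.ofReal (π x) := by
      apply lintegral_congr_ae
      filter_upwards [hnn_ae] with x hx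
      rw [Real.norm_of_nonneg hx]
    rw [this, hconstraint]
    exact ENNReal.ofReal_lt_top
  have hint_real : (∫ x in Set.Icc (-H) H, π x) = 2 * vinf := by
    rw [integral_eq_lintegral_of_nonneg_ae hnn_ae hmeas.aestronglyMeasurable,
      hconstraint, ENNReal.toReal_ofReal (by positivity)]
  have hvol : volume (Set.Icc (-H) H) = ENNReal.ofReal (2 * H) := by
    rw [Real.volume_Icc]
    congr 1
    ring
  have hf_int : Integrable (fun x => a * π x + b) (volume.restrict (Set.Icc (-H) H)) :=
    (hπint.const_mul a).add (integrable_const b)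
  have hf_val : (∫ x in Set.Icc (-H) H, (a * π x + b)) = a * (2 * vinf) + 2 * H * b := by
    rw [integral_add (hπint.const_mul a) (integrable_const b), integral_const_mul,
      hint_real, setIntegral_const, smul_eq_mul, measureReal_def, hvol,
      ENNReal.toReal_ofReal (by positivity)]
  -- positive part
  have hg_int : Integrable (fun x => max (a * π x + b) 0) (volume.restrict (Set.Icc (-H) H)) :=
    hf_int.pos_part
  have step1 : ENNReal.ofReal (2 * H * G p0)
      ≤ ∫⁻ x in Set.Icc (-H) H, ENNReal.ofReal (a * π x + b) := by
    have h1 : (∫ x in Set.Icc (-H) H, (a * π x + b))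
        ≤ ∫ x in Set.Icc (-H) H, max (a * π x + b) 0 :=
      integral_mono hf_int hg_int fun x => le_max_left _ _
    have h2 : ENNReal.ofReal (∫ x in Set.Icc (-H) H, max (a * π x + b) 0)
        ≤ ∫⁻ x in Set.Icc (-H) H, ENNReal.ofReal (max (a * π x + b) 0) :=
      le_of_eq (ofReal_integral_eq_lintegral_ofReal hg_int
        (Filter.Eventually.of_forall fun x => le_max_right _ _))
    have h3 : (∫⁻ x in Set.Icc (-H) H, ENNReal.ofReal (max (a * π x + b) 0))
        = ∫⁻ x in Set.Icc (-H) H, ENNReal.ofReal (a * π x + b) := by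
      apply lintegral_congr fun x => ?_
      rcases le_or_gt 0 (a * π x + b) with hx | hx
      · rw [max_eq_left hx]
      · rw [max_eq_right hx.le, ENNReal.ofReal_of_nonpos hx.le, ENNReal.ofReal_zero]
    calc ENNReal.ofReal (2 * H * G p0)
        = ENNReal.ofReal (∫ x in Set.Icc (-H) H, (a * π x + b)) := by rw [hf_val, key2]
      _ ≤ ENNReal.ofReal (∫ x in Set.Icc (-H) H, max (a * π x + b) 0) :=
          ENNReal.ofReal_le_ofReal h1
      _ ≤ ∫⁻ x in Set.Icc (-H) H, ENNReal.ofReal (max (a * π x + b) 0) := h2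
      _ = _ := h3
  refine le_trans step1 (lintegral_mono_ae ?_)
  filter_upwards [ae_restrict_mem measurableSet_Icc] with x hx
  exact ENNReal.ofReal_le_ofReal (key1 (π x) (hnn x hx))
end
end

section
/- (Characterization of minimizers for small shear velocity.) Let π∘ > 0 and μ̃ : [0,∞) → (0,∞) be continuous, strictly decreasing on [0, π∘], strictly increasing on [π∘, ∞), with μ̃(π) → ∞ as π → ∞; let π* > π∘ satisfy ∫₀^{π*} μ̃ = π*·μ̃(π*); set R(π) = ∫₀^{π} μ̃(s) ds. Let H > 0 and 0 < v∞ < π*·H. Then a Lebesgue-integrable function π : [−H,H] → [0,∞) with ∫_{−H}^{H} π(x) dx = 2 v∞ satisfies ∫_{−H}^{H} R(π(x)) dx = 2 v∞·μ̃(π*) (the minimal possible value) if and only if π(x) ∈ {0, π*} for almost every x ∈ [−H,H]; in that case the set {x : π(x) = π*} has Lebesgue measure 2 v∞/π*. -/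
open MeasureTheory Set Filter

noncomputable section

lemma mu_intInt (mu : ℝ → ℝ) (hc : ContinuousOn mu (Set.Ici 0))
    (a b : ℝ) (ha : 0 ≤ a) (hb : 0 ≤ b) : IntervalIntegrable mu volume a b :=
  (hc.mono (fun x hx => le_trans (le_min ha hb) hx.1)).intervalIntegrable

lemma key_strict (pc ps : ℝ) (hpc : 0 < pc) (mu : ℝ → ℝ)
    (hc : ContinuousOn mu (Set.Ici 0))
    (hanti : StrictAntiOn mu (Set.Icc 0 pc))
    (hmono : StrictMonoOn mu (Set.Ici pc))
    (hps : pc < ps) (hps_eq : (∫ s in (0:ℝ)..ps, mu s) = ps * mu ps)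
    (p : ℝ) (hp : 0 ≤ p) (hne : p ≠ 0) (hne2 : p ≠ ps) :
    mu ps * p < ∫ s in (0:ℝ)..p, mu s := by
  have hps0 : (0:ℝ) ≤ ps := le_of_lt (hpc.trans hps)
  set m := mu ps with hm
  -- mu 0 > m
  have hmu0 : m < mu 0 := by
    by_contra hcon
    push_neg at hcon
    have hposint : 0 < ∫ s in (0:ℝ)..ps, (m - mu s) := by
      apply intervalIntegral.intervalIntegral_pos_of_pos_on
      · exact (intervalIntegrable_const).sub (mu_intInt mu hc 0 ps le_rfl hps0)
      · intro s hs
        rcases le_total s pc with h1 | h1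
        · have : mu s < mu 0 := hanti ⟨le_rfl, le_of_lt hpc⟩ ⟨le_of_lt hs.1, h1⟩ hs.1
          linarith
        · have : mu s < m := hmono (mem_Ici.2 h1) (mem_Ici.2 (le_of_lt hps)) hs.2
          linarith
      · exact hpc.trans hps
    rw [intervalIntegral.integral_sub intervalIntegrable_const
        (mu_intInt mu hc 0 ps le_rfl hps0), intervalIntegral.integral_const,
        hps_eq] at hposint
    simp at hposint
  have hmupc : mu pc < m := hmono (mem_Ici.2 le_rfl) (mem_Ici.2 (le_of_lt hps)) hps
  -- IVT
  obtain ⟨p1, hp1, hp1eq⟩ : ∃ p1 ∈ Ioo (0:ℝ) pc, mu p1 = m := by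
    have := intermediate_value_Ioo' (le_of_lt hpc)
      (hc.mono (fun x hx => hx.1))
    exact this ⟨hmupc, hmu0⟩
  rcases lt_or_gt_of_ne hne2 with hlt | hgt
  · -- 0 < p < ps
    have hp' : 0 < p := lt_of_le_of_ne hp (Ne.symm hne)
    rcases le_total p p1 with h1 | h1
    · -- p ≤ p1 : ∫₀^p (mu - m) > 0
      have hposint : 0 < ∫ s in (0:ℝ)..p, (mu s - m) := by
        apply intervalIntegral.intervalIntegral_pos_of_pos_on
        · exact (mu_intInt mu hc 0 p le_rfl hp).sub intervalIntegrable_const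
        · intro s hs
          have hs1 : s < p1 := lt_of_lt_of_le hs.2 h1
          have : m < mu s := by
            rw [← hp1eq]
            exact hanti ⟨le_of_lt hs.1, le_of_lt (hs1.trans hp1.2)⟩
              ⟨le_of_lt hp1.1, le_of_lt hp1.2⟩ hs1
          linarith
        · exact hp'
      rw [intervalIntegral.integral_sub (mu_intInt mu hc 0 p le_rfl hp)
          intervalIntegrable_const, intervalIntegral.integral_const] at hposint
      simp at hposint
      linarith [hposint]
    · -- p1 ≤ p < ps : ∫_p^ps (m - mu) > 0
      have hposint : 0 < ∫ s in p..ps, (m - mu s) := by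
        apply intervalIntegral.intervalIntegral_pos_of_pos_on
        · exact intervalIntegrable_const.sub (mu_intInt mu hc p ps hp hps0)
        · intro s hs
          have hs1 : p1 < s := lt_of_le_of_lt h1 hs.1
          rcases le_total s pc with h2 | h2
          · have : mu s < mu p1 := hanti ⟨le_of_lt hp1.1, le_of_lt hp1.2⟩
              ⟨le_of_lt (hp1.1.trans hs1), h2⟩ hs1
            rw [hp1eq] at this; linarith
          · have : mu s < m := hmono (mem_Ici.2 h2) (mem_Ici.2 (le_of_lt hps)) hs.2
            linarith
        · exact hlt
      have hadd : (∫ s in (0:ℝ)..p, mu s) + (∫ s in p..ps, mu s)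
          = ∫ s in (0:ℝ)..ps, mu s :=
        intervalIntegral.integral_add_adjacent_intervals
          (mu_intInt mu hc 0 p le_rfl hp) (mu_intInt mu hc p ps hp hps0)
      rw [intervalIntegral.integral_sub intervalIntegrable_const
          (mu_intInt mu hc p ps hp hps0), intervalIntegral.integral_const] at hposint
      simp only [smul_eq_mul] at hposint
      have := hps_eq
      nlinarith [hposint, hadd]
  · -- p > ps
    have hposint : 0 < ∫ s in ps..p, (mu s - m) := by
      apply intervalIntegral.intervalIntegral_pos_of_pos_on
      · exact (mu_intInt mu hc ps p hps0 hp).sub intervalIntegrable_const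
      · intro s hs
        have : m < mu s := hmono (mem_Ici.2 (le_of_lt hps)) (mem_Ici.2
          (le_of_lt (hps.trans hs.1))) hs.1
        linarith
      · exact hgt
    have hadd : (∫ s in (0:ℝ)..ps, mu s) + (∫ s in ps..p, mu s)
        = ∫ s in (0:ℝ)..p, mu s :=
      intervalIntegral.integral_add_adjacent_intervals
        (mu_intInt mu hc 0 ps le_rfl hps0) (mu_intInt mu hc ps p hps0 hp)
    rw [intervalIntegral.integral_sub (mu_intInt mu hc ps p hps0 hp)
        intervalIntegrable_const, intervalIntegral.integral_const] at hposint
    simp only [smul_eq_mul] at hposint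
    nlinarith [hposint, hadd, hps_eq]

lemma key_le (pc ps : ℝ) (hpc : 0 < pc) (mu : ℝ → ℝ)
    (hc : ContinuousOn mu (Set.Ici 0))
    (hanti : StrictAntiOn mu (Set.Icc 0 pc))
    (hmono : StrictMonoOn mu (Set.Ici pc))
    (hps : pc < ps) (hps_eq : (∫ s in (0:ℝ)..ps, mu s) = ps * mu ps)
    (p : ℝ) (hp : 0 ≤ p) :
    mu ps * p ≤ ∫ s in (0:ℝ)..p, mu s := by
  by_cases h0 : p = 0
  · simp [h0]
  by_cases h1 : p = ps
  · rw [h1, hps_eq]; ring_nf; exact le_rfl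
  exact le_of_lt (key_strict pc ps hpc mu hc hanti hmono hps hps_eq p hp h0 h1)


/-- characterization of minimizers for small shear
velocity.  With `R(π) = ∫₀^π μ̃` and `0 < v∞ < π*·H`, an integrable
`π : [-H,H] → [0,∞)` with `∫ π = 2 v∞` attains
`∫ R(π(x)) dx = 2 v∞·μ̃(π*)` (the minimal possible value) if and only if
`π(x) ∈ {0, π*}` a.e.; in that case `{x : π(x) = π*}` has measure
`2 v∞/π*`. -/
theorem minimizers_small_velocity
    (pc ps : ℝ) (hpc : 0 < pc) (mu R : ℝ → ℝ)
    (hc : ContinuousOn mu (Set.Ici 0))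
    (hpos : ∀ p, 0 ≤ p → 0 < mu p)
    (hanti : StrictAntiOn mu (Set.Icc 0 pc))
    (hmono : StrictMonoOn mu (Set.Ici pc))
    (htop : Tendsto mu atTop atTop)
    (hps : pc < ps) (hps_eq : (∫ s in (0:ℝ)..ps, mu s) = ps * mu ps)
    (hR : ∀ p, R p = ∫ s in (0:ℝ)..p, mu s)
    (H vinf : ℝ) (hH : 0 < H) (hv : 0 < vinf) (hvs : vinf < ps * H)
    (π : ℝ → ℝ)
    (hint : IntegrableOn π (Set.Icc (-H) H))
    (hnn : ∀ x ∈ Set.Icc (-H) H, 0 ≤ π x)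
    (hconstraint : (∫ x in Set.Icc (-H) H, π x) = 2 * vinf) :
    ((∫ x in Set.Icc (-H) H, R (π x)) = 2 * vinf * mu ps ↔
      ∀ᵐ x ∂(volume.restrict (Set.Icc (-H) H)), π x = 0 ∨ π x = ps) ∧
    ((∫ x in Set.Icc (-H) H, R (π x)) = 2 * vinf * mu ps →
      volume {x ∈ Set.Icc (-H) H | π x = ps} = ENNReal.ofReal (2 * vinf / ps)) := by
  set I := Set.Icc (-H) H with hI
  set m := mu ps with hm
  have hps0 : (0:ℝ) < ps := hpc.trans hps
  have hmpos : 0 < m := hpos ps (le_of_lt hps0)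
  have hR0 : R 0 = 0 := by rw [hR]; simp
  have hRps : R ps = ps * m := by rw [hR, hps_eq]
  have hnn_ae : ∀ᵐ x ∂(volume.restrict I), 0 ≤ π x := by
    filter_upwards [ae_restrict_mem measurableSet_Icc] with x hx
    exact hnn x hx
  -- the iff
  have hiff : (∫ x in I, R (π x)) = 2 * vinf * m ↔
      ∀ᵐ x ∂(volume.restrict I), π x = 0 ∨ π x = ps := by
    constructor
    · intro heq
      by_cases hRint : Integrable (fun x => R (π x)) (volume.restrict I)
      · have hmπ : Integrable (fun x => m * π x) (volume.restrict I) :=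
          hint.const_mul m
        have hsub : Integrable (fun x => R (π x) - m * π x) (volume.restrict I) :=
          hRint.sub hmπ
        have hle : 0 ≤ᵐ[volume.restrict I] fun x => R (π x) - m * π x := by
          filter_upwards [hnn_ae] with x hx
          have := key_le pc ps hpc mu hc hanti hmono hps hps_eq (π x) hx
          rw [← hR] at this
          simpa using this
        have hzero : (∫ x in I, (R (π x) - m * π x)) = 0 := by
          rw [integral_sub hRint hmπ, heq, integral_const_mul, hconstraint]
          ring
        have haezero := (integral_eq_zero_iff_of_nonneg_ae hle hsub).1 hzero
        filter_upwards [haezero, hnn_ae] with x hx hx0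
        by_contra hcon
        push_neg at hcon
        have := key_strict pc ps hpc mu hc hanti hmono hps hps_eq (π x) hx0
          hcon.1 hcon.2
        rw [← hR] at this
        have hx' : R (π x) - m * π x = 0 := hx
        linarith
      · exfalso
        rw [integral_undef hRint] at heq
        nlinarith
    · intro hae
      have hcong : (fun x => R (π x)) =ᵐ[volume.restrict I] fun x => m * π x := by
        filter_upwards [hae] with x hx
        rcases hx with h | h
        · rw [h, hR0]; ring
        · rw [h, hRps]; ring
      rw [integral_congr_ae hcong, integral_const_mul, hconstraint]
      ring
  refine ⟨hiff, fun heq => ?_⟩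
  have hae := hiff.1 heq
  obtain ⟨g, hgm, hgae⟩ := hint.aemeasurable
  have hnull : volume ({x | π x ≠ g x} ∩ I) = 0 := by
    have h1 : (volume.restrict I) {x | π x ≠ g x} = 0 := hgae
    rwa [Measure.restrict_apply' measurableSet_Icc] at h1
  set B := g ⁻¹' {ps} with hB
  have hBm : MeasurableSet B := hgm (measurableSet_singleton ps)
  -- the set in the goal equals B ∩ I up to null sets
  have hsets : volume {x ∈ I | π x = ps} = volume (B ∩ I) := by
    apply measure_congr
    rw [MeasureTheory.ae_eq_set]
    constructor
    · apply measure_mono_null (fun x hx => ?_) hnull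
      obtain ⟨⟨hxI, hxps⟩, hxB⟩ := hx
      refine ⟨fun h => hxB ⟨?_, hxI⟩, hxI⟩
      simp [hB, ← h, hxps]
    · apply measure_mono_null (fun x hx => ?_) hnull
      obtain ⟨⟨hxB, hxI⟩, hxn⟩ := hx
      have : g x = ps := hxB
      exact ⟨fun h => hxn ⟨hxI, h.trans this⟩, hxI⟩
  -- compute the integral of π via the indicator
  have hind : π =ᵐ[volume.restrict I] B.indicator (fun _ => ps) := by
    filter_upwards [hae, hgae] with x h1 h2
    by_cases hx : g x = ps
    · have hxB : x ∈ B := by simp [hB, hx]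
      rw [Set.indicator_of_mem hxB, h2, hx]
    · have hxB : x ∉ B := by simp [hB, hx]
      rw [Set.indicator_of_notMem hxB]
      rcases h1 with h | h
      · exact h
      · exact absurd (h2 ▸ h : g x = ps) hx
  have hcalc : (∫ x in I, π x) = (volume (B ∩ I)).toReal * ps := by
    rw [integral_congr_ae hind, MeasureTheory.setIntegral_indicator hBm,
      setIntegral_const, smul_eq_mul, Set.inter_comm]
    rfl
  have hfin : volume (B ∩ I) ≠ ⊤ := by
    apply ne_top_of_le_ne_top _ (measure_mono Set.inter_subset_right)
    simp [hI]
  have htm : (volume (B ∩ I)).toReal = 2 * vinf / ps := by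
    rw [hconstraint] at hcalc
    field_simp
    linarith
  rw [hsets, ← htm, ENNReal.ofReal_toReal hfin]
end
end

section
/- (Uniqueness of the even, monotone minimizer: plateau profile.) Let π∘ > 0 and μ̃ : [0,∞) → (0,∞) be continuous, strictly decreasing on [0, π∘], strictly increasing on [π∘, ∞), with μ̃(π) → ∞ as π → ∞; let π* > π∘ satisfy ∫₀^{π*} μ̃ = π*·μ̃(π*); set R(π) = ∫₀^{π} μ̃(s) ds. Let H > 0, 0 < v∞ < π*·H, and set h = v∞/π* ∈ (0,H). Suppose π : [−H,H] → [0,∞) is Lebesgue integrable, even (π(−x) = π(x) for a.e. x), nonincreasing on [0,H], satisfies ∫_{−H}^{H} π(x) dx = 2 v∞ and attains the minimum value ∫_{−H}^{H} R(π(x)) dx = 2 v∞·μ̃(π*). Then π(x) = π* for almost every x with |x| < h and π(x) = 0 for almost every x with h < |x| ≤ H. -/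
open MeasureTheory Set Filter

noncomputable section

/-- uniqueness of the even, monotone minimizer: plateau
profile.  With `R(π) = ∫₀^π μ̃`, `0 < v∞ < π*·H` and `h = v∞/π*`, every
integrable, a.e. even, on `[0,H]` nonincreasing `π : [-H,H] → [0,∞)` with
`∫ π = 2 v∞` attaining the minimal value `∫ R(π(x)) dx = 2 v∞·μ̃(π*)`
satisfies `π = π*` a.e. on `{|x| < h}` and `π = 0` a.e. on `{h < |x| ≤ H}`. -/
theorem minimizer_plateau_profile
    (pc ps : ℝ) (hpc : 0 < pc) (mu R : ℝ → ℝ)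
    (hc : ContinuousOn mu (Set.Ici 0))
    (hpos : ∀ p, 0 ≤ p → 0 < mu p)
    (hanti : StrictAntiOn mu (Set.Icc 0 pc))
    (hmono : StrictMonoOn mu (Set.Ici pc))
    (htop : Tendsto mu atTop atTop)
    (hps : pc < ps) (hps_eq : (∫ s in (0:ℝ)..ps, mu s) = ps * mu ps)
    (hR : ∀ p, R p = ∫ s in (0:ℝ)..p, mu s)
    (H vinf : ℝ) (hH : 0 < H) (hv : 0 < vinf) (hvs : vinf < ps * H)
    (π : ℝ → ℝ)
    (hint : IntegrableOn π (Set.Icc (-H) H))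
    (hnn : ∀ x ∈ Set.Icc (-H) H, 0 ≤ π x)
    (heven : ∀ᵐ x ∂(volume.restrict (Set.Icc (-H) H)), π (-x) = π x)
    (hmonoπ : AntitoneOn π (Set.Icc 0 H))
    (hconstraint : (∫ x in Set.Icc (-H) H, π x) = 2 * vinf)
    (hmin : (∫ x in Set.Icc (-H) H, R (π x)) = 2 * vinf * mu ps) :
    ∀ᵐ x ∂(volume.restrict (Set.Icc (-H) H)),
      (|x| < vinf / ps → π x = ps) ∧ (vinf / ps < |x| → π x = 0) := by
  set m := mu ps with hm
  have hps0 : 0 < ps := hpc.trans hps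
  have hm0 : 0 < m := hpos ps hps0.le
  have hR0 : R 0 = 0 := by simp [hR]
  have hRps : R ps = ps * m := by rw [hR]; exact hps_eq
  have hmuint : ∀ a b : ℝ, 0 ≤ a → 0 ≤ b → IntervalIntegrable mu volume a b := by
    intro a b ha hb
    exact (hc.mono fun x hx => le_trans (le_inf ha hb) hx.1).intervalIntegrable
  have hRsub : ∀ p q : ℝ, 0 ≤ q → 0 ≤ p → R p - R q = ∫ s in q..p, mu s := by
    intro p q hq hp
    have := intervalIntegral.integral_add_adjacent_intervals
      (hmuint 0 q le_rfl hq) (hmuint q p hq hp)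
    rw [hR, hR]; linarith
  have hmupc : mu pc < m := hmono (mem_Ici.2 le_rfl) (mem_Ici.2 hps.le) hps
  -- mu 0 > m
  have hmu0 : m < mu 0 := by
    by_contra hle
    push_neg at hle
    have hlt : (∫ s in (0:ℝ)..ps, mu s) < ∫ _ in (0:ℝ)..ps, m := by
      apply intervalIntegral.integral_lt_integral_of_continuousOn_of_le_of_exists_lt hps0
        (hc.mono (Icc_subset_Ici_self)) continuousOn_const
      · intro x hx
        rcases le_or_gt x pc with h1 | h1
        · exact le_trans (hanti ⟨le_rfl, hpc.le⟩ ⟨hx.1.le, h1⟩ hx.1).le hle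
        · exact (hmono.monotoneOn (mem_Ici.2 h1.le) (mem_Ici.2 hps.le) hx.2)
      · exact ⟨pc, ⟨hpc.le, hps.le⟩, hmupc⟩
    rw [intervalIntegral.integral_const] at hlt
    simp only [smul_eq_mul, sub_zero] at hlt
    linarith [hps_eq]
  -- the crossing point a
  obtain ⟨a, ha_mem, ha_eq⟩ : ∃ a ∈ Icc 0 pc, mu a = m :=
    intermediate_value_Icc' hpc.le (hc.mono (Icc_subset_Ici_self)) ⟨hmupc.le, hmu0.le⟩
  have ha0 : 0 < a :=
    ha_mem.1.lt_of_ne (by rintro rfl; exact hmu0.ne' ha_eq)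
  have hgt1 : ∀ x ∈ Ico 0 a, m < mu x := by
    intro x hx
    have := hanti ⟨hx.1, hx.2.le.trans ha_mem.2⟩ ha_mem hx.2
    rw [ha_eq] at this; exact this
  have hlt1 : ∀ x ∈ Ioo a ps, mu x < m := by
    intro x hx
    rcases le_or_gt x pc with h1 | h1
    · have := hanti ha_mem ⟨ha_mem.1.trans hx.1.le, h1⟩ hx.1
      rw [ha_eq] at this; exact this
    · exact hmono (mem_Ici.2 h1.le) (mem_Ici.2 hps.le) hx.2
  have hgt2 : ∀ x, ps < x → m < mu x := fun x hx =>
    hmono (mem_Ici.2 hps.le) (mem_Ici.2 (hps.le.trans hx.le)) hx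
  -- key pointwise inequality
  have hkey : ∀ p, 0 ≤ p → m * p ≤ R p ∧ (R p = m * p → p = 0 ∨ p = ps) := by
    intro p hp
    have hstrict : p ≠ 0 → p ≠ ps → m * p < R p := by
      intro h0 hps'
      have hp0 : 0 < p := hp.lt_of_ne (Ne.symm h0)
      rcases lt_trichotomy p ps with h | h | h
      · rcases le_or_gt p a with hpa | hpa
        · have hpos' : 0 < ∫ s in (0:ℝ)..p, (mu s - m) := by
            apply intervalIntegral.intervalIntegral_pos_of_pos_on
            · exact (hmuint 0 p le_rfl hp).sub intervalIntegrable_const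
            · intro x hx
              have := hgt1 x ⟨hx.1.le, hx.2.trans_le hpa⟩; linarith
            · exact hp0
          have heq : (∫ s in (0:ℝ)..p, (mu s - m)) = R p - m * p := by
            rw [intervalIntegral.integral_sub (hmuint 0 p le_rfl hp) intervalIntegrable_const,
              intervalIntegral.integral_const, hR]
            simp only [smul_eq_mul, sub_zero]; ring
          linarith
        · have hpos' : 0 < ∫ s in p..ps, (m - mu s) := by
            apply intervalIntegral.intervalIntegral_pos_of_pos_on
            · exact intervalIntegrable_const.sub (hmuint p ps hp hps0.le)
            · intro x hx
              have := hlt1 x ⟨hpa.trans hx.1, hx.2⟩; linarith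
            · exact h
          have heq : (∫ s in p..ps, (m - mu s)) = R p - m * p := by
            rw [intervalIntegral.integral_sub intervalIntegrable_const (hmuint p ps hp hps0.le),
              intervalIntegral.integral_const, ← hRsub ps p hp hps0.le]
            simp only [smul_eq_mul]
            linarith [hRps]
          linarith
      · exact absurd h hps'
      · have hpos' : 0 < ∫ s in ps..p, (mu s - m) := by
          apply intervalIntegral.intervalIntegral_pos_of_pos_on
          · exact (hmuint ps p hps0.le hp).sub intervalIntegrable_const
          · intro x hx
            have := hgt2 x hx.1; linarith
          · exact h
        have heq : (∫ s in ps..p, (mu s - m)) = R p - m * p := by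
          rw [intervalIntegral.integral_sub (hmuint ps p hps0.le hp) intervalIntegrable_const,
            intervalIntegral.integral_const, ← hRsub p ps hps0.le hp]
          simp only [smul_eq_mul]
          linarith [hRps]
        linarith
    constructor
    · by_cases h0 : p = 0
      · simp [h0, hR0]
      · by_cases hps' : p = ps
        · rw [hps', hRps]; ring_nf; exact le_rfl
        · exact (hstrict h0 hps').le
    · intro heq
      by_contra hcon
      push_neg at hcon
      exact (hstrict hcon.1 hcon.2).ne' heq
  -- integrability of R ∘ π
  have hRint : IntegrableOn (fun x => R (π x)) (Set.Icc (-H) H) := by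
    by_contra hni
    rw [integral_undef hni] at hmin
    nlinarith
  -- the deviation vanishes a.e.
  have hf0 : (fun x => R (π x) - m * π x)
      =ᵐ[volume.restrict (Set.Icc (-H) H)] 0 := by
    have hfi : Integrable (fun x => R (π x) - m * π x)
        (volume.restrict (Set.Icc (-H) H)) := hRint.sub (hint.const_mul m)
    have hnn' : 0 ≤ᵐ[volume.restrict (Set.Icc (-H) H)]
        fun x => R (π x) - m * π x := by
      filter_upwards [ae_restrict_mem measurableSet_Icc] with x hx
      have := (hkey (π x) (hnn x hx)).1
      simp only [Pi.zero_apply]; linarith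
    have hzero : (∫ x in Set.Icc (-H) H, (R (π x) - m * π x)) = 0 := by
      rw [integral_sub hRint (hint.const_mul m), integral_const_mul, hmin, hconstraint]
      ring
    exact (integral_eq_zero_iff_of_nonneg_ae hnn' hfi).mp hzero
  have hvals : ∀ᵐ x ∂(volume.restrict (Set.Icc (-H) H)), π x = 0 ∨ π x = ps := by
    filter_upwards [hf0, ae_restrict_mem measurableSet_Icc] with x hx hmem
    have hx' : R (π x) = m * π x := by
      simpa [sub_eq_zero] using hx
    exact (hkey (π x) (hnn x hmem)).2 hx'
  -- the plateau length t
  set S : Set ℝ := {x | x ∈ Icc 0 H ∧ ps / 2 ≤ π x} with hS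
  set t := sSup (insert 0 S) with ht
  have hbdd : BddAbove (insert 0 S) := ⟨H, by rintro x (rfl | hx); exacts [hH.le, hx.1.2]⟩
  have ht0 : 0 ≤ t := le_csSup hbdd (mem_insert 0 _)
  have htH : t ≤ H := csSup_le (insert_nonempty 0 S)
    (by rintro x (rfl | hx); exacts [hH.le, hx.1.2])
  have hlow : ∀ x ∈ Icc 0 H, x < t → ps / 2 ≤ π x := by
    intro x hx hxt
    obtain ⟨y, hy, hxy⟩ := exists_lt_of_lt_csSup (insert_nonempty 0 S) hxt
    rcases hy with rfl | hy
    · exact absurd hxy (not_lt.2 hx.1)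
    · exact le_trans hy.2 (hmonoπ hx hy.1 hxy.le)
  have hhigh : ∀ x ∈ Icc 0 H, t < x → π x < ps / 2 := by
    intro x hx hxt
    by_contra hge
    push_neg at hge
    exact absurd (le_csSup hbdd (mem_insert_of_mem _ ⟨hx, hge⟩)) (not_le.2 hxt)
  -- integral over [0,H]
  have hsub : Icc (0:ℝ) H ⊆ Icc (-H) H := Icc_subset_Icc (by linarith) le_rfl
  have hπ_eq : π =ᵐ[volume.restrict (Icc 0 H)]
      (Ico 0 t).indicator (fun _ => ps) := by
    have hvals' : ∀ᵐ x ∂(volume.restrict (Icc 0 H)), π x = 0 ∨ π x = ps :=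
      ae_restrict_of_ae_restrict_of_subset hsub hvals
    have hne : ∀ᵐ x ∂(volume.restrict (Icc 0 H)), x ≠ t := by
      refine ae_restrict_of_ae ?_
      refine (ae_iff).2 ?_
      simp [not_ne_iff, setOf_eq_eq_singleton]
    filter_upwards [hvals', hne, ae_restrict_mem measurableSet_Icc] with x hx hxt hmem
    rcases lt_trichotomy x t with h | h | h
    · have hge := hlow x hmem h
      have hxps : π x = ps := by
        rcases hx with h0 | hps'
        · rw [h0] at hge; linarith
        · exact hps'
      rw [hxps, indicator_of_mem (mem_Ico.2 ⟨hmem.1, h⟩)]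
    · exact absurd h hxt
    · have hlt := hhigh x hmem h
      have h0 : π x = 0 := by
        rcases hx with h0 | hps'
        · exact h0
        · rw [hps'] at hlt; linarith
      rw [h0, indicator_of_notMem (by simp [mem_Ico]; intro _; linarith)]
  have hIcoSub : Ico (0:ℝ) t ⊆ Icc 0 H :=
    Ico_subset_Icc_self.trans (Icc_subset_Icc_right htH)
  have hIcap : Icc (0:ℝ) H ∩ Ico 0 t = Ico 0 t := inter_eq_self_of_subset_right hIcoSub
  have hIcc0H : (∫ x in Icc 0 H, π x) = ps * t := by
    rw [integral_congr_ae hπ_eq, setIntegral_indicator measurableSet_Ico,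
      setIntegral_const, hIcap, measureReal_def, Real.volume_Ico, smul_eq_mul,
      ENNReal.toReal_ofReal (by linarith)]
    ring
  -- splitting the full integral by evenness
  have huIcc : uIcc (-H) H = Icc (-H) H := uIcc_of_le (by linarith)
  have hII : IntervalIntegrable π volume (-H) H :=
    IntegrableOn.intervalIntegrable (by rwa [huIcc])
  have hII1 : IntervalIntegrable π volume (-H) 0 := by
    apply hII.mono_set
    rw [uIcc_of_le (by linarith : -H ≤ (0:ℝ)), huIcc]
    exact Icc_subset_Icc le_rfl hH.le
  have hII2 : IntervalIntegrable π volume 0 H := by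
    apply hII.mono_set
    rw [uIcc_of_le hH.le, huIcc]
    exact Icc_subset_Icc (by linarith) le_rfl
  have hneg : (∫ x in (-H)..0, π x) = ∫ x in (0:ℝ)..H, π x := by
    have h1 : (∫ x in (0:ℝ)..H, π (-x)) = ∫ x in (-H)..0, π x := by
      simpa using intervalIntegral.integral_comp_neg (a := 0) (b := H) π
    rw [← h1]
    apply intervalIntegral.integral_congr_ae
    have := (ae_restrict_iff' measurableSet_Icc).1 heven
    filter_upwards [this] with x hx hxI
    rw [uIoc_of_le hH.le] at hxI
    exact hx ⟨by linarith [hxI.1], hxI.2⟩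
  have hsplit : (∫ x in Icc (-H) H, π x) = 2 * (ps * t) := by
    have e1 : (∫ x in Icc (-H) H, π x) = ∫ x in (-H)..H, π x := by
      rw [intervalIntegral.integral_of_le (by linarith), integral_Icc_eq_integral_Ioc]
    have e2 : (∫ x in (0:ℝ)..H, π x) = ∫ x in Icc 0 H, π x := by
      rw [intervalIntegral.integral_of_le hH.le, integral_Icc_eq_integral_Ioc]
    rw [e1, ← intervalIntegral.integral_add_adjacent_intervals hII1 hII2, hneg, e2, hIcc0H]
    ring
  have htval : t = vinf / ps := by
    rw [hsplit] at hconstraint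
    field_simp
    linarith
  -- conclusion
  filter_upwards [heven, hvals, ae_restrict_mem measurableSet_Icc] with x hevx hvx hmem
  have habs : |x| ∈ Icc 0 H := ⟨abs_nonneg x, abs_le.2 ⟨hmem.1, hmem.2⟩⟩
  have hπabs : π |x| = π x := by
    rcases le_or_gt 0 x with h | h
    · rw [abs_of_nonneg h]
    · rw [abs_of_neg h]; exact hevx
  constructor
  · intro hlt
    have hge := hlow |x| habs (by rw [htval]; exact hlt)
    rw [hπabs] at hge
    rcases hvx with h0 | hps'
    · rw [h0] at hge; linarith
    · exact hps'
  · intro hgt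
    have hlt := hhigh |x| habs (by rw [htval]; exact hgt)
    rw [hπabs] at hlt
    rcases hvx with h0 | hps'
    · exact h0
    · rw [hps'] at hlt; linarith
end
end

section
/- (Unique minimizer for large shear velocity.) Let π∘ > 0 and μ̃ : [0,∞) → (0,∞) be continuous, strictly decreasing on [0, π∘], strictly increasing on [π∘, ∞), with μ̃(π) → ∞ as π → ∞; let π* > π∘ satisfy ∫₀^{π*} μ̃ = π*·μ̃(π*); set R(π) = ∫₀^{π} μ̃(s) ds. Let H > 0 and v∞ ≥ π*·H. Then for every Lebesgue-integrable π : [−H,H] → [0,∞) with ∫_{−H}^{H} π(x) dx = 2 v∞ one has ∫_{−H}^{H} R(π(x)) dx ≥ 2H·R(v∞/H), and equality holds if and only if π(x) = v∞/H for almost every x ∈ [−H,H]. -/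
open MeasureTheory Set Filter

noncomputable section

lemma aux_key (pc ps m : ℝ) (hpc : 0 < pc) (mu : ℝ → ℝ)
    (hc : ContinuousOn mu (Set.Ici 0))
    (hanti : StrictAntiOn mu (Set.Icc 0 pc))
    (hmono : StrictMonoOn mu (Set.Ici pc))
    (hps : pc < ps) (hps_eq : (∫ s in (0:ℝ)..ps, mu s) = ps * mu ps)
    (hm : ps ≤ m) (t : ℝ) (ht : 0 ≤ t) :
    (∫ s in (0:ℝ)..m, mu s) + mu m * (t - m) ≤ (∫ s in (0:ℝ)..t, mu s) ∧
    (m < t → (∫ s in (0:ℝ)..m, mu s) + mu m * (t - m) < ∫ s in (0:ℝ)..t, mu s) := by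
  have hm0 : (0:ℝ) ≤ m := le_trans (le_of_lt (hpc.trans hps)) hm
  have hpcm : pc ≤ m := le_trans hps.le hm
  have hii : ∀ a b : ℝ, 0 ≤ a → 0 ≤ b → IntervalIntegrable mu volume a b := by
    intro a b ha hb
    exact (hc.mono (fun x hx => le_trans (le_min ha hb) hx.1)).intervalIntegrable
  set g : ℝ → ℝ := fun s => mu s - mu m with hg
  have hgii : ∀ a b : ℝ, 0 ≤ a → 0 ≤ b → IntervalIntegrable g volume a b := by
    intro a b ha hb
    exact (hii a b ha hb).sub intervalIntegrable_const
  -- key identity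
  have heq : ∀ u : ℝ, 0 ≤ u →
      (∫ s in (0:ℝ)..u, mu s) - ((∫ s in (0:ℝ)..m, mu s) + mu m * (u - m))
        = ∫ s in m..u, g s := by
    intro u hu
    have h1 : (∫ s in m..u, g s) = (∫ s in m..u, mu s) - (u - m) * mu m := by
      rw [hg]
      rw [intervalIntegral.integral_sub (hii m u hm0 hu) intervalIntegrable_const,
        intervalIntegral.integral_const, smul_eq_mul]
    have h2 : (∫ s in m..u, mu s) = (∫ s in (0:ℝ)..u, mu s) - ∫ s in (0:ℝ)..m, mu s :=
      (intervalIntegral.integral_interval_sub_left (hii 0 u le_rfl hu) (hii 0 m le_rfl hm0)).symm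
    rw [h1, h2]; ring
  rcases le_or_gt m t with hmt | htm
  · -- t ≥ m
    have hnn : ∀ u ∈ Icc m t, 0 ≤ g u := by
      intro u hu
      have : mu m ≤ mu u := by
        rcases eq_or_lt_of_le hu.1 with h | h
        · rw [h]
        · exact (hmono (le_trans hps.le hm) (le_trans hpcm hu.1) h).le
      simpa [hg] using sub_nonneg.mpr this
    have h0 : 0 ≤ ∫ s in m..t, g s := intervalIntegral.integral_nonneg hmt hnn
    constructor
    · nlinarith [heq t ht]
    · intro hlt
      have hpos' : 0 < ∫ s in m..t, g s := by
        apply intervalIntegral.intervalIntegral_pos_of_pos_on (hgii m t hm0 ht) _ hlt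
        intro x hx
        have : mu m < mu x := hmono (le_trans hps.le hm) (le_trans hpcm hx.1.le) hx.1
        simpa [hg] using sub_pos.mpr this
      nlinarith [heq t ht]
  · -- t < m : show ∫ t..m g ≤ 0 ; strict claim vacuous
    have hzero : ∀ a b : ℝ, 0 ≤ a → 0 ≤ b → a ≤ b → (∀ x ∈ Icc a b, g x ≤ 0) →
        (∫ s in a..b, g s) ≤ 0 := by
      intro a b ha hb hab hle
      have := intervalIntegral.integral_mono_on hab (hgii a b ha hb)
        (_root_.intervalIntegrable_const (c := (0:ℝ))) hle
      simpa using this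
    have main : (∫ s in t..m, g s) ≤ 0 := by
      rcases le_or_gt pc t with hpct | htpc
      · -- pc ≤ t < m
        apply hzero t m ht hm0 htm.le
        intro x hx
        have : mu x ≤ mu m := by
          rcases eq_or_lt_of_le hx.2 with h | h
          · rw [h]
          · exact (hmono (le_trans hpct hx.1) (le_trans hps.le hm) h).le
        simpa [hg] using sub_nonpos.mpr this
      · -- t < pc
        rcases le_or_gt (mu t) (mu m) with hmu | hmu
        · have hsplit : (∫ s in t..m, g s) = (∫ s in t..pc, g s) + ∫ s in pc..m, g s :=
            (intervalIntegral.integral_add_adjacent_intervals (hgii t pc ht hpc.le)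
              (hgii pc m hpc.le hm0)).symm
          have h1 : (∫ s in t..pc, g s) ≤ 0 := by
            apply hzero t pc ht hpc.le htpc.le
            intro x hx
            have hxle : mu x ≤ mu t := by
              rcases eq_or_lt_of_le hx.1 with h | h
              · rw [← h]
              · exact (hanti ⟨ht, htpc.le⟩ ⟨le_trans ht hx.1, hx.2⟩ h).le
            simpa [hg] using sub_nonpos.mpr (le_trans hxle hmu)
          have h2 : (∫ s in pc..m, g s) ≤ 0 := by
            apply hzero pc m hpc.le hm0 hpcm
            intro x hx
            have : mu x ≤ mu m := by
              rcases eq_or_lt_of_le hx.2 with h | h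
              · rw [h]
              · exact (hmono hx.1 (le_trans hps.le hm) h).le
            simpa [hg] using sub_nonpos.mpr this
          linarith
        · have hsplit : (∫ s in t..m, g s) = (∫ s in (0:ℝ)..m, g s) - ∫ s in (0:ℝ)..t, g s :=
            (intervalIntegral.integral_interval_sub_left (hgii 0 m le_rfl hm0)
              (hgii 0 t le_rfl ht)).symm
          have h1 : 0 ≤ ∫ s in (0:ℝ)..t, g s := by
            apply intervalIntegral.integral_nonneg ht
            intro x hx
            have hxge : mu t ≤ mu x := by
              rcases eq_or_lt_of_le hx.2 with h | h
              · rw [h]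
              · exact (hanti ⟨hx.1, le_trans hx.2 htpc.le⟩ ⟨ht, htpc.le⟩ h).le
            simpa [hg] using sub_nonneg.mpr (le_trans hmu.le hxge)
          have h2 : (∫ s in (0:ℝ)..m, g s) ≤ 0 := by
            have hsplit2 : (∫ s in (0:ℝ)..m, mu s)
                = (∫ s in (0:ℝ)..ps, mu s) + ∫ s in ps..m, mu s :=
              (intervalIntegral.integral_add_adjacent_intervals (hii 0 ps le_rfl (hpc.trans hps).le)
                (hii ps m (hpc.trans hps).le hm0)).symm
            have h3 : (∫ s in ps..m, mu s) ≤ (m - ps) * mu m := by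
              have := intervalIntegral.integral_mono_on hm (hii ps m (hpc.trans hps).le hm0)
                (_root_.intervalIntegrable_const (c := mu m)) (fun x hx => by
                  rcases eq_or_lt_of_le hx.2 with h | h
                  · rw [h]
                  · exact (hmono (le_trans hps.le hx.1) (le_trans hps.le hm) h).le)
              simpa [smul_eq_mul] using this
            have h4 : mu ps ≤ mu m := by
              rcases eq_or_lt_of_le hm with h | h
              · rw [h]
              · exact (hmono hps.le (le_trans hps.le hm) h).le
            have h5 : (∫ s in (0:ℝ)..m, g s) = (∫ s in (0:ℝ)..m, mu s) - m * mu m := by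
              rw [hg, intervalIntegral.integral_sub (hii 0 m le_rfl hm0) intervalIntegrable_const,
                intervalIntegral.integral_const, smul_eq_mul]; ring_nf
            have hps0 : (0:ℝ) ≤ ps := (hpc.trans hps).le
            nlinarith [hps_eq]
          linarith
    have hsym : (∫ s in m..t, g s) = -∫ s in t..m, g s := intervalIntegral.integral_symm t m
    refine ⟨by nlinarith [heq t ht], fun h => absurd h (not_lt.mpr htm.le)⟩

/-- unique minimizer for large shear velocity.
With `R(π) = ∫₀^π μ̃` and `v∞ ≥ π*·H`, every integrable `π : [-H,H] → [0,∞)`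
with `∫ π = 2 v∞` satisfies `∫ R(π(x)) dx ≥ 2H·R(v∞/H)`, with equality if
and only if `π = v∞/H` almost everywhere. -/
theorem minimizer_large_velocity
    (pc ps : ℝ) (hpc : 0 < pc) (mu R : ℝ → ℝ)
    (hc : ContinuousOn mu (Set.Ici 0))
    (hpos : ∀ p, 0 ≤ p → 0 < mu p)
    (hanti : StrictAntiOn mu (Set.Icc 0 pc))
    (hmono : StrictMonoOn mu (Set.Ici pc))
    (htop : Tendsto mu atTop atTop)
    (hps : pc < ps) (hps_eq : (∫ s in (0:ℝ)..ps, mu s) = ps * mu ps)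
    (hR : ∀ p, R p = ∫ s in (0:ℝ)..p, mu s)
    (H vinf : ℝ) (hH : 0 < H) (hv : ps * H ≤ vinf)
    (π : ℝ → ℝ)
    (hint : IntegrableOn π (Set.Icc (-H) H))
    (hnn : ∀ x ∈ Set.Icc (-H) H, 0 ≤ π x)
    (hconstraint : (∫ x in Set.Icc (-H) H, π x) = 2 * vinf) :
    ENNReal.ofReal (2 * H * R (vinf / H))
      ≤ (∫⁻ x in Set.Icc (-H) H, ENNReal.ofReal (R (π x))) ∧
    ((∫⁻ x in Set.Icc (-H) H, ENNReal.ofReal (R (π x)))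
        = ENNReal.ofReal (2 * H * R (vinf / H)) ↔
      ∀ᵐ x ∂(volume.restrict (Set.Icc (-H) H)), π x = vinf / H) := by
  set m := vinf / H with hm_def
  have hps0 : (0:ℝ) < ps := hpc.trans hps
  have hm : ps ≤ m := (le_div_iff₀ hH).mpr hv
  have hm0 : (0:ℝ) < m := hps0.trans_le hm
  have hmH : m * H = vinf := div_mul_cancel₀ vinf hH.ne'
  set ν := volume.restrict (Set.Icc (-H) H) with hν
  haveI : IsFiniteMeasure ν := by
    constructor
    rw [hν, Measure.restrict_apply_univ]
    exact measure_Icc_lt_top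
  have hνuniv : ν univ = ENNReal.ofReal (2 * H) := by
    rw [hν, Measure.restrict_apply_univ, Real.volume_Icc]
    congr 1; ring
  have hii : ∀ a b : ℝ, 0 ≤ a → 0 ≤ b → IntervalIntegrable mu volume a b := by
    intro a b ha hb
    exact (hc.mono (fun x hx => le_trans (le_min ha hb) hx.1)).intervalIntegrable
  -- the primitive, extended continuously
  set G : ℝ → ℝ := fun t => ∫ s in (0:ℝ)..(max t 0), mu s with hGdef
  have hGcont : Continuous G := by
    rw [continuous_iff_continuousAt]
    intro t
    have hb : (0:ℝ) ≤ max t 0 + 1 := by positivity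
    have hFc : ContinuousOn (fun x => ∫ s in (0:ℝ)..x, mu s) (Icc 0 (max t 0 + 1)) := by
      have h' : IntegrableOn mu (uIcc (0:ℝ) (max t 0 + 1)) volume := by
        rw [uIcc_of_le hb]
        exact (hc.mono (fun x hx => hx.1)).integrableOn_Icc
      have := intervalIntegral.continuousOn_primitive_interval h'
      rwa [uIcc_of_le hb] at this
    have hcw : ContinuousWithinAt (fun x => ∫ s in (0:ℝ)..x, mu s)
        (Icc 0 (max t 0 + 1)) (max t 0) :=
      hFc _ ⟨le_max_right t 0, by linarith⟩
    have htend : Tendsto (fun x => max x 0) (nhds t)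
        (nhdsWithin (max t 0) (Icc 0 (max t 0 + 1))) := by
      rw [tendsto_nhdsWithin_iff]
      refine ⟨(continuous_id.max continuous_const).tendsto t, ?_⟩
      filter_upwards [eventually_lt_nhds (show t < max t 0 + 1 by
        have := le_max_left t 0; linarith)] with x hx
      exact ⟨le_max_right x 0, max_le hx.le hb⟩
    exact hcw.tendsto.comp htend
  have hGR : ∀ t, 0 ≤ t → R t = G t := by
    intro t htt
    rw [hR, hGdef]; simp [max_eq_left htt]
  have hGnn : ∀ t, 0 ≤ G t := by
    intro t
    exact intervalIntegral.integral_nonneg (le_max_right t 0) (fun u hu => (hpos u hu.1).le)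
  have hkey : ∀ t, 0 ≤ t →
      (G m + mu m * (t - m) ≤ G t ∧ (m < t → G m + mu m * (t - m) < G t)) := by
    intro t htt
    have := aux_key pc ps m hpc mu hc hanti hmono hps hps_eq hm t htt
    simpa [hGdef, max_eq_left htt, max_eq_left hm0.le] using this
  have hae_mem : ∀ᵐ x ∂ν, x ∈ Set.Icc (-H) H := ae_restrict_mem measurableSet_Icc
  have hπnn : ∀ᵐ x ∂ν, 0 ≤ π x := hae_mem.mono fun x hx => hnn x hx
  have hLI : (∫⁻ x in Set.Icc (-H) H, ENNReal.ofReal (R (π x)))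
      = ∫⁻ x, ENNReal.ofReal (G (π x)) ∂ν :=
    lintegral_congr_ae (hπnn.mono fun x hx => by dsimp only; rw [hGR _ hx])
  have hRGm : R (vinf / H) = G m := hGR m hm0.le
  -- the affine minorant
  have hsubint : Integrable (fun x => π x - m) ν := hint.sub (integrable_const m)
  have h2int : Integrable (fun x => mu m * (π x - m)) ν := hsubint.const_mul (mu m)
  have hLint : Integrable (fun x => G m + mu m * (π x - m)) ν :=
    (integrable_const _).add h2int
  have hπint : (∫ x, π x ∂ν) = 2 * vinf := hconstraint
  have htR : ν.real univ = 2 * H := by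
    rw [measureReal_def, hνuniv, ENNReal.toReal_ofReal (by positivity)]
  have e1 : (∫ x, (π x - m) ∂ν) = 2 * vinf - 2 * H * m := by
    rw [integral_sub hint (integrable_const m), integral_const, hπint, htR, smul_eq_mul]
  have hLval : (∫ x, (G m + mu m * (π x - m)) ∂ν) = 2 * H * G m := by
    have e2 : (∫ x, (G m + mu m * (π x - m)) ∂ν)
        = (∫ _x, (G m : ℝ) ∂ν) + ∫ x, mu m * (π x - m) ∂ν :=
      integral_add (integrable_const _) h2int
    have e3 : (∫ x, mu m * (π x - m) ∂ν) = mu m * ∫ x, (π x - m) ∂ν :=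
      integral_const_mul _ _
    have e4 : 2 * vinf - 2 * H * m = 0 := by
      have := hmH; linarith
    rw [e2, e3, e1, e4, mul_zero, integral_const, htR, smul_eq_mul]
    ring
  have hle : ∀ᵐ x ∂ν, G m + mu m * (π x - m) ≤ G (π x) :=
    hπnn.mono fun x hx => (hkey _ hx).1
  have hmeasG : AEStronglyMeasurable (fun x => G (π x)) ν :=
    hGcont.comp_aestronglyMeasurable hint.aestronglyMeasurable
  have hGm_nn : 0 ≤ G m := hGnn m
  by_cases hfin : Integrable (fun x => G (π x)) ν
  · have hlin : (∫⁻ x, ENNReal.ofReal (G (π x)) ∂ν) = ENNReal.ofReal (∫ x, G (π x) ∂ν) :=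
      (ofReal_integral_eq_lintegral_ofReal hfin (hπnn.mono fun x _ => hGnn (π x))).symm
    have hge : 2 * H * G m ≤ ∫ x, G (π x) ∂ν := by
      rw [← hLval]; exact integral_mono_ae hLint hfin hle
    constructor
    · rw [hLI, hlin, hRGm]
      exact ENNReal.ofReal_le_ofReal hge
    · rw [hLI, hlin, hRGm]
      constructor
      · intro h
        have h2H : (0:ℝ) ≤ 2 * H * G m := by positivity
        have hIeq : (∫ x, G (π x) ∂ν) = 2 * H * G m := by
          have := (ENNReal.ofReal_eq_ofReal_iff (le_trans h2H hge) h2H).mp h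
          linarith
        have heq0 : (∫ x, (G (π x) - (G m + mu m * (π x - m))) ∂ν) = 0 := by
          rw [integral_sub hfin hLint, hLval, hIeq]; ring
        have hae0 := (integral_eq_zero_iff_of_nonneg_ae
          (hle.mono fun x hx => sub_nonneg.mpr hx) (hfin.sub hLint)).mp heq0
        have hπle : ∀ᵐ x ∂ν, π x ≤ m := by
          filter_upwards [hπnn, hae0] with x hx h0
          by_contra hlt
          push_neg at hlt
          have := (hkey _ hx).2 hlt
          have h0' : G (π x) - (G m + mu m * (π x - m)) = 0 := h0
          linarith
        have hsub0 : (∫ x, (m - π x) ∂ν) = 0 := by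
          rw [integral_sub (integrable_const m) hint, integral_const, hπint, htR, smul_eq_mul]
          have := hmH; linarith
        have := (integral_eq_zero_iff_of_nonneg_ae
          (hπle.mono fun x hx => sub_nonneg.mpr hx) ((integrable_const m).sub hint)).mp hsub0
        filter_upwards [this] with x hx
        have hx' : m - π x = 0 := hx
        linarith
      · intro hconst
        have h1 : (∫⁻ x, ENNReal.ofReal (G (π x)) ∂ν) = ENNReal.ofReal (G m) * ν univ := by
          rw [lintegral_congr_ae (hconst.mono fun x hx => by dsimp only; rw [hx] :
            (fun x => ENNReal.ofReal (G (π x))) =ᵐ[ν] fun _ => ENNReal.ofReal (G m))]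
          exact lintegral_const _
        rw [← hlin, h1, hνuniv, ← ENNReal.ofReal_mul hGm_nn]
        congr 1
        ring
  · have htop' : (∫⁻ x, ENNReal.ofReal (G (π x)) ∂ν) = ⊤ := by
      by_contra hne
      apply hfin
      refine ⟨hmeasG, ?_⟩
      rw [hasFiniteIntegral_iff_ofReal (hπnn.mono fun x _ => hGnn (π x))]
      exact lt_top_iff_ne_top.mpr hne
    constructor
    · rw [hLI, htop']; exact le_top
    · rw [hLI, htop', hRGm]
      constructor
      · intro h
        exact absurd h.symm (ENNReal.ofReal_ne_top)
      · intro hconst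
        exfalso
        apply hfin
        have hGconst : (fun x => G (π x)) =ᵐ[ν] fun _ => G m :=
          hconst.mono fun x hx => by dsimp only; rw [hx]
        exact (integrable_const (G m)).congr hGconst.symm
end
end

section
/- (Nonuniqueness of minimizers without monotonicity.) Let π∘ > 0 and μ̃ : [0,∞) → (0,∞) be continuous, strictly decreasing on [0, π∘], strictly increasing on [π∘, ∞), with μ̃(π) → ∞ as π → ∞; let π* > π∘ satisfy ∫₀^{π*} μ̃ = π*·μ̃(π*); set R(π) = ∫₀^{π} μ̃(s) ds. Let H > 0 and 0 < v∞ < π*·H. Then for every Lebesgue-measurable set P ⊆ [−H,H] of Lebesgue measure 2 v∞/π*, the function π = π*·1_P (equal to π* on P and 0 off P) satisfies the constraint ∫_{−H}^{H} π(x) dx = 2 v∞ and attains the minimal value ∫_{−H}^{H} R(π(x)) dx = 2 v∞·μ̃(π*); that is, ∫_{−H}^{H} R(π̃(x)) dx ≥ 2 v∞·μ̃(π*) for every integrable π̃ : [−H,H] → [0,∞) with ∫ π̃ = 2 v∞. -/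
open MeasureTheory Set Filter

noncomputable section

/-- nonuniqueness of minimizers without monotonicity.
With `R(π) = ∫₀^π μ̃` and `0 < v∞ < π*·H`, for every measurable
`P ⊆ [-H,H]` with measure `2 v∞/π*`, the function `π = π*·1_P` satisfies the
constraint `∫ π = 2 v∞` and attains the minimal value
`∫ R(π(x)) dx = 2 v∞·μ̃(π*)`, i.e. `∫ R(π̃) ≥ 2 v∞·μ̃(π*)` for every
integrable `π̃ : [-H,H] → [0,∞)` with `∫ π̃ = 2 v∞`. -/
theorem minimizers_nonunique
    (pc ps : ℝ) (hpc : 0 < pc) (mu R : ℝ → ℝ)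
    (hc : ContinuousOn mu (Set.Ici 0))
    (hpos : ∀ p, 0 ≤ p → 0 < mu p)
    (hanti : StrictAntiOn mu (Set.Icc 0 pc))
    (hmono : StrictMonoOn mu (Set.Ici pc))
    (htop : Tendsto mu atTop atTop)
    (hps : pc < ps) (hps_eq : (∫ s in (0:ℝ)..ps, mu s) = ps * mu ps)
    (hR : ∀ p, R p = ∫ s in (0:ℝ)..p, mu s)
    (H vinf : ℝ) (hH : 0 < H) (hv : 0 < vinf) (hvs : vinf < ps * H)
    (P : Set ℝ) (hPsub : P ⊆ Set.Icc (-H) H) (hPmeas : MeasurableSet P)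
    (hPvol : volume P = ENNReal.ofReal (2 * vinf / ps)) :
    (∫ x in Set.Icc (-H) H, P.indicator (fun _ => ps) x) = 2 * vinf ∧
    (∫ x in Set.Icc (-H) H, R (P.indicator (fun _ => ps) x)) = 2 * vinf * mu ps ∧
    (∀ π : ℝ → ℝ, IntegrableOn π (Set.Icc (-H) H) →
      (∀ x ∈ Set.Icc (-H) H, 0 ≤ π x) →
      (∫ x in Set.Icc (-H) H, π x) = 2 * vinf →
      ENNReal.ofReal (2 * vinf * mu ps)
        ≤ ∫⁻ x in Set.Icc (-H) H, ENNReal.ofReal (R (π x))) := by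
  have hps0 : (0:ℝ) < ps := hpc.trans hps
  have hmups : 0 < mu ps := hpos ps hps0.le
  have hRps : R ps = ps * mu ps := by rw [hR]; exact hps_eq
  have hR0 : R 0 = 0 := by rw [hR]; simp
  -- interval integrability of mu on nonnegative intervals
  have hint : ∀ a b : ℝ, 0 ≤ a → 0 ≤ b → IntervalIntegrable mu volume a b := by
    intro a b ha hb
    apply (hc.mono ?_).intervalIntegrable
    intro x hx
    exact le_trans (le_min ha hb) hx.1
  -- the key pointwise bound
  have hA : ∀ p, 0 ≤ p → p ≤ ps → (∀ s ∈ Set.Icc p ps, mu s ≤ mu ps) →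
      mu ps * p ≤ R p := by
    intro p hp hps' hbd
    have hsplit : R ps = R p + ∫ s in p..ps, mu s := by
      rw [hR, hR]
      exact (intervalIntegral.integral_add_adjacent_intervals
        (hint 0 p le_rfl hp) (hint p ps hp hps0.le)).symm
    have hb : (∫ s in p..ps, mu s) ≤ (ps - p) * mu ps := by
      have := intervalIntegral.integral_mono_on hps' (hint p ps hp hps0.le)
        intervalIntegrable_const hbd
      simpa [smul_eq_mul] using this
    nlinarith [hRps]
  have hkey : ∀ p, 0 ≤ p → mu ps * p ≤ R p := by
    intro p hp
    rcases le_or_gt ps p with h1 | h1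
    · -- large p : R p = R ps + ∫_{ps}^p mu ≥ ps·mu ps + (p-ps)·mu ps
      have hsplit : R p = R ps + ∫ s in ps..p, mu s := by
        rw [hR, hR]
        exact (intervalIntegral.integral_add_adjacent_intervals
          (hint 0 ps le_rfl hps0.le) (hint ps p hps0.le hp)).symm
      have hb : (p - ps) * mu ps ≤ ∫ s in ps..p, mu s := by
        have : ∀ s ∈ Set.Icc ps p, mu ps ≤ mu s := by
          intro s hs
          exact hmono.monotoneOn hps.le (le_trans hps.le hs.1) hs.1
        have := intervalIntegral.integral_mono_on h1 intervalIntegrable_const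
          (hint ps p hps0.le hp) this
        simpa [smul_eq_mul] using this
      nlinarith [hRps]
    · rcases le_or_gt pc p with h2 | h2
      · -- pc ≤ p ≤ ps : mu ≤ mu ps on [p, ps]
        refine hA p hp h1.le ?_
        intro s hs
        exact hmono.monotoneOn (le_trans h2 hs.1) hps.le hs.2
      · rcases le_total (mu p) (mu ps) with h3 | h3
        · -- p < pc, mu p ≤ mu ps : still mu ≤ mu ps on [p, ps]
          refine hA p hp h1.le ?_
          intro s hs
          rcases le_or_gt s pc with h4 | h4
          · exact le_trans (hanti.antitoneOn ⟨hp, h2.le⟩ ⟨le_trans hp hs.1, h4⟩ hs.1) h3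
          · exact hmono.monotoneOn h4.le hps.le hs.2
        · -- p < pc, mu ps ≤ mu p : R p ≥ p · mu p ≥ p · mu ps
          have hb : p * mu p ≤ R p := by
            rw [hR]
            have : ∀ s ∈ Set.Icc (0:ℝ) p, mu p ≤ mu s := by
              intro s hs
              exact hanti.antitoneOn ⟨hs.1, le_trans hs.2 h2.le⟩ ⟨hp, h2.le⟩ hs.2
            have := intervalIntegral.integral_mono_on hp intervalIntegrable_const
              (hint 0 p le_rfl hp) this
            simpa [smul_eq_mul, mul_comm] using this
          nlinarith
  have hs_meas : MeasurableSet (Set.Icc (-H) H) := measurableSet_Icc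
  have hPIcc : Set.Icc (-H) H ∩ P = P := Set.inter_eq_self_of_subset_right hPsub
  have hvolP : (volume P).toReal = 2 * vinf / ps := by
    rw [hPvol, ENNReal.toReal_ofReal]; positivity
  have h1 : (∫ x in Set.Icc (-H) H, P.indicator (fun _ => ps) x) = 2 * vinf := by
    rw [MeasureTheory.setIntegral_indicator hPmeas, hPIcc, setIntegral_const, measureReal_def, hvolP,
      smul_eq_mul]
    field_simp
  refine ⟨h1, ?_, ?_⟩
  · have h2fun : ∀ x, R (P.indicator (fun _ => ps) x)
        = P.indicator (fun _ => ps * mu ps) x := by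
      intro x
      by_cases hx : x ∈ P <;> simp [Set.indicator, hx, hR0, hRps]
    calc (∫ x in Set.Icc (-H) H, R (P.indicator (fun _ => ps) x))
        = ∫ x in Set.Icc (-H) H, P.indicator (fun _ => ps * mu ps) x := by
          exact integral_congr_ae (ae_of_all _ fun x => h2fun x)
      _ = 2 * vinf * mu ps := by
          rw [MeasureTheory.setIntegral_indicator hPmeas, hPIcc, setIntegral_const, measureReal_def, hvolP,
            smul_eq_mul]
          field_simp
  · intro π hπint hπpos hπeq
    have hmono_pt : ∀ x ∈ Set.Icc (-H) H,
        ENNReal.ofReal (mu ps * π x) ≤ ENNReal.ofReal (R (π x)) :=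
      fun x hx => ENNReal.ofReal_le_ofReal (hkey (π x) (hπpos x hx))
    calc ENNReal.ofReal (2 * vinf * mu ps)
        = ENNReal.ofReal (∫ x in Set.Icc (-H) H, mu ps * π x) := by
          rw [integral_const_mul, hπeq]; ring_nf
      _ ≤ ∫⁻ x in Set.Icc (-H) H, ENNReal.ofReal (mu ps * π x) :=
          le_of_eq (ofReal_integral_eq_lintegral_ofReal (hπint.const_mul _)
            ((ae_restrict_iff' hs_meas).2
              (ae_of_all _ fun x hx => mul_nonneg hmups.le (hπpos x hx))))
      _ ≤ ∫⁻ x in Set.Icc (-H) H, ENNReal.ofReal (R (π x)) :=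
          lintegral_mono_ae ((ae_restrict_iff' hs_meas).2 (ae_of_all _ hmono_pt))
end
end

section
/- (Unique steady state of the 1-degree-of-freedom slider.) Let μ0 > 0, let A : ℝ → [0,∞) be continuous and even with A(0) = 0, strictly increasing on [0,∞) and unbounded, let B : ℝ → [0,∞), and set μ(π,θ) = μ0 + A(π) + B(θ). Let Π(σ,θ) denote the unique π with σ ∈ μ(π,θ)·Sign(π). Let h > 0, θ∞ > 0 and v∞ > 0. Then a pair (σ, θ) ∈ ℝ² satisfies the steady-state equations v∞ = h·Π(σ,θ) and 1 − θ/θ∞ − 10·Π(σ,θ)·θ = 0 if and only if θ = θ∞/(1 + 10 (v∞/h) θ∞) and σ = μ0 + A(v∞/h) + B(θ∞/(1 + 10 (v∞/h) θ∞)); in particular the steady state is unique. -/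
open MeasureTheory Set Filter

noncomputable section

/-- unique steady state of the 1-degree-of-freedom slider.
With `μ(π,θ) = μ0 + A(π) + B(θ)` and `Π(σ,θ)` the unique `π` with
`σ ∈ μ(π,θ)·Sign(π)`, a pair `(σ,θ)` solves the steady-state equations
`v∞ = h·Π(σ,θ)` and `1 - θ/θ∞ - 10·Π(σ,θ)·θ = 0` if and only if
`θ = θ∞/(1 + 10 (v∞/h) θ∞)` and `σ = μ0 + A(v∞/h) + B(θ∞/(1 + 10 (v∞/h) θ∞))`;
in particular the steady state is unique. -/
theorem slider_unique_steady_state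
    (μ0 : ℝ) (hμ0 : 0 < μ0) (A B : ℝ → ℝ)
    (hAc : Continuous A) (hAnn : ∀ p, 0 ≤ A p) (hAeven : ∀ p, A (-p) = A p)
    (hA0 : A 0 = 0) (hAmono : StrictMonoOn A (Set.Ici (0:ℝ)))
    (hAunbdd : ¬ BddAbove (Set.range A))
    (hBnn : ∀ t, 0 ≤ B t)
    (Pmap : ℝ → ℝ → ℝ)
    (hPmap : ∀ σ t : ℝ,
      (∃ ξ ∈ SignSet (Pmap σ t), σ = (μ0 + A (Pmap σ t) + B t) * ξ) ∧
      ∀ p : ℝ, (∃ ξ ∈ SignSet p, σ = (μ0 + A p + B t) * ξ) → p = Pmap σ t)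
    (h θinf vinf : ℝ) (hh : 0 < h) (hθinf : 0 < θinf) (hvinf : 0 < vinf) :
    ∀ σ t : ℝ,
      (vinf = h * Pmap σ t ∧ 1 - t / θinf - 10 * Pmap σ t * t = 0) ↔
      (t = θinf / (1 + 10 * (vinf / h) * θinf) ∧
        σ = μ0 + A (vinf / h) + B (θinf / (1 + 10 * (vinf / h) * θinf))) := by
  intro σ t
  have hp : 0 < vinf / h := div_pos hvinf hh
  have hden : 0 < 1 + 10 * (vinf / h) * θinf := by positivity
  constructor
  · rintro ⟨h1, h2⟩
    have hP : Pmap σ t = vinf / h := by field_simp at h1 ⊢; linarith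
    have ht : t = θinf / (1 + 10 * (vinf / h) * θinf) := by
      rw [hP] at h2
      field_simp at h2 ⊢
      linarith
    refine ⟨ht, ?_⟩
    obtain ⟨⟨ξ, hξ, hσ⟩, -⟩ := hPmap σ t
    rw [hP] at hξ hσ
    have : ξ = 1 := by simpa [SignSet, hp] using hξ
    rw [hσ, this, mul_one, ht]
  · rintro ⟨ht, hσ⟩
    have hP : Pmap σ t = vinf / h := by
      refine ((hPmap σ t).2 (vinf / h) ⟨1, ?_, ?_⟩).symm
      · simp [SignSet, hp]
      · rw [hσ, ht, mul_one]
    constructor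
    · rw [hP]; field_simp
    · rw [hP, ht]; field_simp; ring
end
end

section
/- (Pointwise limit of even, monotone steady states as the aging length scale κ → 0.) Let H > 0, θ∞ > 0, v∞ > 0. Let μ : ℝ² → ℝ be continuous with π ↦ μ(π,θ) nondecreasing on [0,∞) for every θ and inf_θ μ(0,θ) > 0, and assume the superlinearity condition: there is a continuous Φ : [0,∞) → [0,∞) with Φ(r)/r → ∞ as r → ∞ and ∫₀^{r} μ(s,θ) ds ≥ Φ(r) for all r ≥ 0 and all θ ∈ ℝ. Let f0, f1 : ℝ → ℝ be continuous. Let κ_n → 0⁺ and suppose for each n there are σ_n ∈ ℝ, a twice continuously differentiable θ_n : [−H,H] → ℝ and a continuous π_n : [−H,H] → [0,∞) such that: θ_n and π_n are even, θ_n is nondecreasing on [0,H] with 0 ≤ θ_n ≤ θ∞ and θ_n(±H) = θ∞, π_n is nonincreasing on [0,H] with ∫_{−H}^{H} π_n(x) dx = 2 v∞; for every x ∈ (−H,H), κ_n θ_n''(x) = π_n(x) f1(θ_n(x)) − f0(θ_n(x)); and for every x ∈ [−H,H] there is ξ ∈ Sign(π_n(x)) with μ(π_n(x), θ_n(x))·ξ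 = σ_n. Then there exist a subsequence (n_k), a real number σ⁰, and measurable functions θ⁰, π⁰ : [−H,H] → ℝ with θ⁰ even and nondecreasing on [0,H], π⁰ even and nonincreasing on [0,H], such that σ_{n_k} → σ⁰, θ_{n_k}(x) → θ⁰(x) and π_{n_k}(x) → π⁰(x) for almost every x ∈ [−H,H], π⁰ is Lebesgue integrable with ∫_{−H}^{H} π⁰(x) dx = 2 v∞, and for almost every x ∈ [−H,H]: f0(θ⁰(x)) = π⁰(x)·f1(θ⁰(x)) and there exists ξ ∈ Sign(π⁰(x)) with μ(π⁰(x), θ⁰(x))·ξ = σ⁰. -/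
open MeasureTheory Set Filter

noncomputable section

lemma signSet_subset_Icc (p : ℝ) : SignSet p ⊆ Set.Icc (-1) 1 := by
  unfold SignSet; split_ifs <;> simp_all [Set.singleton_subset_iff]

lemma helly_aux {F : ℕ → ℝ → ℝ} (hmono : ∀ k, Monotone (F k)) {L : ℚ → ℝ}
    (hconv : ∀ q : ℚ, Tendsto (fun k => F k (q:ℝ)) atTop (nhds (L q)))
    {a b : ℝ} (hbd : ∀ k x, a ≤ F k x ∧ F k x ≤ b) :
    ∃ f : ℝ → ℝ, Monotone f ∧ (∀ x, a ≤ f x ∧ f x ≤ b) ∧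
      ∀ x, ContinuousAt f x → Tendsto (fun k => F k x) atTop (nhds (f x)) := by
  have hLb : ∀ q : ℚ, a ≤ L q ∧ L q ≤ b := fun q =>
    ⟨le_of_tendsto_of_tendsto' tendsto_const_nhds (hconv q) (fun k => (hbd k q).1),
     le_of_tendsto_of_tendsto' (hconv q) tendsto_const_nhds (fun k => (hbd k q).2)⟩
  set f : ℝ → ℝ := fun x => sInf (L '' {q : ℚ | x < (q:ℝ)}) with hf
  have hne : ∀ x : ℝ, (L '' {q : ℚ | x < (q:ℝ)}).Nonempty := by
    intro x
    obtain ⟨q, hq⟩ := exists_rat_gt x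
    exact ⟨L q, ⟨q, hq, rfl⟩⟩
  have hbdd : ∀ x : ℝ, BddBelow (L '' {q : ℚ | x < (q:ℝ)}) := by
    intro x
    exact ⟨a, by rintro z ⟨q, _, rfl⟩; exact (hLb q).1⟩
  have hmf : Monotone f := by
    intro x y hxy
    exact csInf_le_csInf (hbdd x) (hne y) (image_mono (fun q hq => lt_of_le_of_lt hxy hq))
  have hfb : ∀ x, a ≤ f x ∧ f x ≤ b := by
    intro x
    constructor
    · exact le_csInf (hne x) (by rintro z ⟨q, _, rfl⟩; exact (hLb q).1)
    · obtain ⟨q, hq⟩ := exists_rat_gt x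
      exact le_trans (csInf_le (hbdd x) ⟨q, hq, rfl⟩) (hLb q).2
  refine ⟨f, hmf, hfb, ?_⟩
  intro x hcont
  rw [Metric.tendsto_atTop]
  intro ε hε
  -- upper bound rational
  obtain ⟨z, ⟨q, hqx, rfl⟩, hzlt⟩ :=
    exists_lt_of_csInf_lt (hne x) (show f x < f x + ε/2 by linarith)
  -- lower bound via continuity
  obtain ⟨δ, hδ, hδball⟩ := Metric.continuousAt_iff.1 hcont (ε/2) (by linarith)
  obtain ⟨p, hyp, hpx⟩ := exists_rat_btwn (show x - δ/2 < x by linarith)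
  have hfyL : f (x - δ/2) ≤ L p := csInf_le (hbdd _) ⟨p, hyp, rfl⟩
  have hfy : f x - ε/2 < f (x - δ/2) := by
    have := hδball (show dist (x - δ/2) x < δ by
      rw [Real.dist_eq]; rw [abs_sub_lt_iff]; constructor <;> linarith)
    rw [Real.dist_eq, abs_sub_lt_iff] at this
    linarith [this.2]
  have hLp : f x - ε/2 < L p := lt_of_lt_of_le hfy hfyL
  obtain ⟨N₁, hN₁⟩ := (Metric.tendsto_atTop.1 (hconv q)) (ε/2) (by linarith)
  obtain ⟨N₂, hN₂⟩ := (Metric.tendsto_atTop.1 (hconv p)) (ε/2) (by linarith)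
  refine ⟨max N₁ N₂, fun k hk => ?_⟩
  have h1 := hN₁ k (le_trans (le_max_left _ _) hk)
  have h2 := hN₂ k (le_trans (le_max_right _ _) hk)
  rw [Real.dist_eq, abs_sub_lt_iff] at h1 h2 ⊢
  have hup : F k x ≤ F k q := hmono k (le_of_lt hqx)
  have hlo : F k p ≤ F k x := hmono k (le_of_lt hpx)
  constructor <;> nlinarith [h1.1, h1.2, h2.1, h2.2]

/-- pointwise limit of even, monotone steady states as the
aging length scale `κ → 0`.  Given a sequence `κ_n → 0⁺` of even, monotone
steady states `(σ_n, θ_n, π_n)` of the rate-and-state system with superlinear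
dissipation, some subsequence converges pointwise a.e. (and `σ_n` in `ℝ`) to an
even, monotone limit `(σ⁰, θ⁰, π⁰)` which satisfies the constraint
`∫ π⁰ = 2v∞` and, a.e., the limit aging relation `f0(θ⁰) = π⁰·f1(θ⁰)` and the
flow rule `σ⁰ ∈ μ(π⁰,θ⁰)·Sign(π⁰)`. -/
theorem kappa_zero_limit_of_even_monotone_steady_states
    (H θinf vinf : ℝ) (hH : 0 < H) (hθinf : 0 < θinf) (hvinf : 0 < vinf)
    (μ : ℝ → ℝ → ℝ) (hμc : Continuous (fun q : ℝ × ℝ => μ q.1 q.2))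
    (hμmono : ∀ t, MonotoneOn (fun p => μ p t) (Set.Ici (0:ℝ)))
    (hμpos : ∃ c > 0, ∀ t, c ≤ μ 0 t)
    (Φ : ℝ → ℝ) (hΦc : ContinuousOn Φ (Set.Ici 0))
    (hΦnn : ∀ r, 0 ≤ r → 0 ≤ Φ r)
    (hΦsuper : Tendsto (fun r => Φ r / r) atTop atTop)
    (hΦbound : ∀ r, 0 ≤ r → ∀ t : ℝ, Φ r ≤ ∫ s in (0:ℝ)..r, μ s t)
    (f0 f1 : ℝ → ℝ) (hf0c : Continuous f0) (hf1c : Continuous f1)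
    (κ : ℕ → ℝ) (hκpos : ∀ n, 0 < κ n) (hκ0 : Tendsto κ atTop (nhds 0))
    (σn : ℕ → ℝ) (θn πn : ℕ → ℝ → ℝ)
    (hθc2 : ∀ n, ContDiffOn ℝ 2 (θn n) (Set.Icc (-H) H))
    (hπc : ∀ n, ContinuousOn (πn n) (Set.Icc (-H) H))
    (hπnn : ∀ n, ∀ x ∈ Set.Icc (-H) H, 0 ≤ πn n x)
    (hθeven : ∀ n, ∀ x ∈ Set.Icc (-H) H, θn n (-x) = θn n x)
    (hπeven : ∀ n, ∀ x ∈ Set.Icc (-H) H, πn n (-x) = πn n x)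
    (hθmono : ∀ n, MonotoneOn (θn n) (Set.Icc 0 H))
    (hθbdd : ∀ n, ∀ x ∈ Set.Icc (-H) H, 0 ≤ θn n x ∧ θn n x ≤ θinf)
    (hθbcl : ∀ n, θn n (-H) = θinf) (hθbcr : ∀ n, θn n H = θinf)
    (hπmono : ∀ n, AntitoneOn (πn n) (Set.Icc 0 H))
    (hπint : ∀ n, (∫ x in (-H)..H, πn n x) = 2 * vinf)
    (haging : ∀ n, ∀ x ∈ Set.Ioo (-H) H,
      κ n * derivWithin (derivWithin (θn n) (Set.Icc (-H) H)) (Set.Icc (-H) H) x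
        = πn n x * f1 (θn n x) - f0 (θn n x))
    (hflow : ∀ n, ∀ x ∈ Set.Icc (-H) H,
      ∃ ξ ∈ SignSet (πn n x), μ (πn n x) (θn n x) * ξ = σn n) :
    ∃ φ : ℕ → ℕ, StrictMono φ ∧
    ∃ (σ0 : ℝ) (θ0 π0 : ℝ → ℝ),
      Measurable θ0 ∧ Measurable π0 ∧
      (∀ x ∈ Set.Icc (-H) H, θ0 (-x) = θ0 x ∧ π0 (-x) = π0 x) ∧
      MonotoneOn θ0 (Set.Icc 0 H) ∧ AntitoneOn π0 (Set.Icc 0 H) ∧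
      Tendsto (fun k => σn (φ k)) atTop (nhds σ0) ∧
      (∀ᵐ x ∂(volume.restrict (Set.Icc (-H) H)),
        Tendsto (fun k => θn (φ k) x) atTop (nhds (θ0 x)) ∧
        Tendsto (fun k => πn (φ k) x) atTop (nhds (π0 x))) ∧
      IntegrableOn π0 (Set.Icc (-H) H) ∧
      (∫ x in (-H)..H, π0 x) = 2 * vinf ∧
      (∀ᵐ x ∂(volume.restrict (Set.Icc (-H) H)),
        f0 (θ0 x) = π0 x * f1 (θ0 x) ∧
        ∃ ξ ∈ SignSet (π0 x), μ (π0 x) (θ0 x) * ξ = σ0) := by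
  obtain ⟨c, hc, hμ0⟩ := hμpos
  have hnH : -H < H := by linarith
  have hHmem : H ∈ Set.Icc (-H) H := ⟨le_of_lt hnH, le_rfl⟩
  have hIccsub : Set.Icc (0:ℝ) H ⊆ Set.Icc (-H) H :=
    Set.Icc_subset_Icc (by linarith) le_rfl
  have hμge : ∀ p t, 0 ≤ p → c ≤ μ p t := fun p t hp =>
    le_trans (hμ0 t) (hμmono t Set.self_mem_Ici hp hp)
  set C := μ (vinf / H) θinf with hC
  -- bound on π at H
  have hπH : ∀ n, πn n H ≤ vinf / H := by
    intro n
    have hle : -H ≤ H := le_of_lt hnH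
    have h1 : ∀ x ∈ Set.Icc (-H) H, πn n H ≤ πn n x := by
      intro x hx
      rcases le_or_gt 0 x with h | h
      · exact hπmono n ⟨h, hx.2⟩ ⟨le_of_lt hH, le_rfl⟩ hx.2
      · have hmx : -x ∈ Set.Icc (0:ℝ) H := ⟨by linarith, by linarith [hx.1]⟩
        have := hπeven n (-x) ⟨by linarith [hx.2], by linarith [hx.1]⟩
        rw [neg_neg] at this
        rw [this]
        exact hπmono n hmx ⟨le_of_lt hH, le_rfl⟩ hmx.2
    have h2 : (∫ _x in (-H)..H, πn n H) ≤ ∫ x in (-H)..H, πn n x := by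
      apply intervalIntegral.integral_mono_on hle intervalIntegrable_const
      · apply ContinuousOn.intervalIntegrable
        rw [uIcc_of_le hle]
        exact hπc n
      · exact h1
    rw [intervalIntegral.integral_const, hπint n] at h2
    have heq2 : (H - -H) • πn n H = 2 * H * πn n H := by
      ring_nf
    rw [heq2] at h2
    rw [le_div_iff₀ hH]
    nlinarith
  -- |σ| is dominated by μ at every point
  have hσle : ∀ n, ∀ x ∈ Set.Icc (-H) H, |σn n| ≤ μ (πn n x) (θn n x) := by
    intro n x hx
    obtain ⟨ξ, hξ, hσ⟩ := hflow n x hx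
    have hξ1 : |ξ| ≤ 1 := abs_le.2 (signSet_subset_Icc _ hξ)
    have hμnn : 0 ≤ μ (πn n x) (θn n x) := le_trans (le_of_lt hc) (hμge _ _ (hπnn n x hx))
    calc |σn n| = |μ (πn n x) (θn n x)| * |ξ| := by rw [← abs_mul, hσ]
    _ ≤ |μ (πn n x) (θn n x)| * 1 := mul_le_mul_of_nonneg_left hξ1 (abs_nonneg _)
    _ = μ (πn n x) (θn n x) := by rw [mul_one, abs_of_nonneg hμnn]
  have hσbd : ∀ n, |σn n| ≤ C := by
    intro n
    refine le_trans (hσle n H hHmem) ?_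
    rw [hθbcr n]
    exact hμmono θinf (hπnn n H hHmem) (le_of_lt (div_pos hvinf hH)) (hπH n)
  -- uniform bound on π
  obtain ⟨M₀, hM₀⟩ := Filter.eventually_atTop.1 (hΦsuper.eventually_gt_atTop C)
  set M := max M₀ 1 with hM
  have hM1 : (1:ℝ) ≤ M := le_max_right _ _
  have hM0 : (0:ℝ) ≤ M := le_trans zero_le_one hM1
  have hπbd : ∀ n, ∀ x ∈ Set.Icc (-H) H, πn n x ≤ M := by
    intro n x hx
    by_contra hcon
    push_neg at hcon
    rw [hM] at hcon
    have hpM₀ : M₀ ≤ πn n x := le_of_lt (lt_of_le_of_lt (le_max_left _ _) hcon)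
    have hppos : 0 < πn n x :=
      lt_of_lt_of_le (by norm_num) (le_of_lt (lt_of_le_of_lt (le_max_right _ _) hcon))
    obtain ⟨ξ, hξ, hσ⟩ := hflow n x hx
    have hξ1 : ξ = 1 := by
      have hss : SignSet (πn n x) = {1} := if_pos hppos
      rw [hss] at hξ
      exact hξ
    rw [hξ1, mul_one] at hσ
    have h1 : C * πn n x < Φ (πn n x) := by
      have := hM₀ (πn n x) hpM₀
      rwa [lt_div_iff₀ hppos] at this
    have h2 : Φ (πn n x) ≤ ∫ s in (0:ℝ)..(πn n x), μ s (θn n x) :=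
      hΦbound (πn n x) (le_of_lt hppos) _
    have h3 : (∫ s in (0:ℝ)..(πn n x), μ s (θn n x))
        ≤ ∫ _s in (0:ℝ)..(πn n x), μ (πn n x) (θn n x) := by
      apply intervalIntegral.integral_mono_on (le_of_lt hppos)
      · apply ContinuousOn.intervalIntegrable
        exact (hμc.comp (continuous_id.prodMk continuous_const)).continuousOn
      · exact intervalIntegrable_const
      · intro s hs
        exact hμmono (θn n x) hs.1 (le_of_lt hppos) hs.2
    rw [intervalIntegral.integral_const, sub_zero, smul_eq_mul] at h3
    have h4 : C < μ (πn n x) (θn n x) := by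
      have hcp : C * πn n x < πn n x * μ (πn n x) (θn n x) := by linarith
      nlinarith
    have h5 : σn n ≤ C := le_trans (le_abs_self _) (hσbd n)
    rw [hσ] at h4
    linarith
  have hπbd' : ∀ n, ∀ x ∈ Set.Icc (-H) H, 0 ≤ πn n x ∧ πn n x ≤ M :=
    fun n x hx => ⟨hπnn n x hx, hπbd n x hx⟩
  -- the clamping map
  set cl : ℝ → ℝ := fun x => max 0 (min x H) with hcl
  have hclmem : ∀ x, cl x ∈ Set.Icc (0:ℝ) H := fun x =>
    ⟨le_max_left _ _, max_le (le_of_lt hH) (min_le_right _ _)⟩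
  have hclmono : Monotone cl := fun x y h =>
    max_le_max le_rfl (min_le_min_right _ h)
  have hclid : ∀ x ∈ Set.Icc (0:ℝ) H, cl x = x := by
    intro x hx
    simp only [hcl, min_eq_left hx.2, max_eq_right hx.1]
  -- compactness selection
  obtain ⟨⟨σ0, Lθ, Lπ⟩, -, φ, hφ, hconv⟩ :=
    IsCompact.tendsto_subseq
      (s := (Set.Icc (-C) C) ×ˢ ((Set.univ.pi fun _ : ℚ => Set.Icc (0:ℝ) θinf) ×ˢ
        (Set.univ.pi fun _ : ℚ => Set.Icc (0:ℝ) M)))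
      (x := fun n => (σn n, (fun q : ℚ => θn n (cl (q:ℝ))), (fun q : ℚ => πn n (cl (q:ℝ)))))
      (isCompact_Icc.prod ((isCompact_univ_pi fun _ => isCompact_Icc).prod
        (isCompact_univ_pi fun _ => isCompact_Icc)))
      (by
        intro n
        refine ⟨abs_le.1 (hσbd n), ?_, ?_⟩
        · intro q _
          exact ⟨(hθbdd n _ (hIccsub (hclmem _))).1, (hθbdd n _ (hIccsub (hclmem _))).2⟩
        · intro q _
          exact ⟨hπnn n _ (hIccsub (hclmem _)), hπbd n _ (hIccsub (hclmem _))⟩)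
  have hκφ : Tendsto (fun k => κ (φ k)) atTop (nhds 0) := hκ0.comp hφ.tendsto_atTop
  have hσconv : Tendsto (fun k => σn (φ k)) atTop (nhds σ0) := by
    have := (continuous_fst.tendsto _).comp hconv
    exact this
  have hθq : ∀ q : ℚ, Tendsto (fun k => θn (φ k) (cl (q:ℝ))) atTop (nhds (Lθ q)) := by
    have h2 := (continuous_fst.tendsto _).comp ((continuous_snd.tendsto _).comp hconv)
    intro q
    exact tendsto_pi_nhds.1 (by simpa [Function.comp] using h2) q
  have hπq : ∀ q : ℚ, Tendsto (fun k => πn (φ k) (cl (q:ℝ))) atTop (nhds (Lπ q)) := by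
    have h2 := (continuous_snd.tendsto _).comp ((continuous_snd.tendsto _).comp hconv)
    intro q
    exact tendsto_pi_nhds.1 (by simpa [Function.comp] using h2) q
  -- Helly selection for θ
  obtain ⟨θr, hθrmono, hθrbd, hθrconv⟩ :=
    helly_aux (F := fun k x => θn (φ k) (cl x))
      (fun k x y h => hθmono (φ k) (hclmem x) (hclmem y) (hclmono h)) hθq
      (a := 0) (b := θinf)
      (fun k x => hθbdd (φ k) _ (hIccsub (hclmem x)))
  -- Helly selection for -π
  obtain ⟨nπr, hnπrmono, hnπrbd, hnπrconv⟩ :=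
    helly_aux (F := fun k x => -(πn (φ k) (cl x)))
      (fun k x y h => neg_le_neg (hπmono (φ k) (hclmem x) (hclmem y) (hclmono h)))
      (fun q => (hπq q).neg)
      (a := -M) (b := 0)
      (fun k x => ⟨neg_le_neg (hπbd (φ k) _ (hIccsub (hclmem x))),
        neg_nonpos.2 (hπnn (φ k) _ (hIccsub (hclmem x)))⟩)
  set θ0 : ℝ → ℝ := fun x => θr |x| with hθ0
  set π0 : ℝ → ℝ := fun x => -nπr |x| with hπ0
  have hθ0bd : ∀ x, 0 ≤ θ0 x ∧ θ0 x ≤ θinf := fun x => hθrbd _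
  have hπ0bd : ∀ x, 0 ≤ π0 x ∧ π0 x ≤ M := fun x =>
    ⟨neg_nonneg.2 (hnπrbd _).2, by have := (hnπrbd |x|).1; simp only [hπ0]; linarith⟩
  have hθ0meas : Measurable θ0 := hθrmono.measurable.comp measurable_abs
  have hπ0meas : Measurable π0 := (hnπrmono.measurable.comp measurable_abs).neg
  have hθ0even : ∀ x : ℝ, θ0 (-x) = θ0 x := fun x => by simp only [hθ0, abs_neg]
  have hπ0even : ∀ x : ℝ, π0 (-x) = π0 x := fun x => by simp only [hπ0, abs_neg]
  -- the exceptional null set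
  set E : Set ℝ := {x : ℝ | ¬ContinuousAt θr |x| ∨ ¬ContinuousAt nπr |x|} with hE
  have hE0 : volume E = 0 := by
    set D : Set ℝ := {x | ¬ContinuousAt θr x} ∪ {x | ¬ContinuousAt nπr x} with hD
    have hDc : D.Countable :=
      (hθrmono.countable_not_continuousAt).union (hnπrmono.countable_not_continuousAt)
    have hsub : E ⊆ D ∪ Neg.neg '' D := by
      intro x hx
      have hxD : |x| ∈ D := by rcases hx with h | h; exacts [Or.inl h, Or.inr h]
      rcases le_or_gt 0 x with h | h
      · rw [abs_of_nonneg h] at hxD; exact Or.inl hxD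
      · rw [abs_of_neg h] at hxD
        exact Or.inr ⟨-x, hxD, by ring⟩
    exact measure_mono_null hsub (Set.Countable.measure_zero (hDc.union (hDc.image _)) _)
  have hkey : ∀ x ∈ Set.Icc (-H) H, x ∉ E →
      Tendsto (fun k => θn (φ k) x) atTop (nhds (θ0 x)) ∧
      Tendsto (fun k => πn (φ k) x) atTop (nhds (π0 x)) := by
    intro x hx hxE
    simp only [hE, Set.mem_setOf_eq, not_or, not_not] at hxE
    have habs : |x| ∈ Set.Icc (0:ℝ) H := ⟨abs_nonneg x, abs_le.2 ⟨hx.1, hx.2⟩⟩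
    have hclx : cl |x| = |x| := hclid _ habs
    have hθeq : ∀ k, θn (φ k) |x| = θn (φ k) x := by
      intro k
      rcases le_or_gt 0 x with h | h
      · rw [abs_of_nonneg h]
      · rw [abs_of_neg h]; exact hθeven (φ k) x hx
    have hπeq : ∀ k, πn (φ k) |x| = πn (φ k) x := by
      intro k
      rcases le_or_gt 0 x with h | h
      · rw [abs_of_nonneg h]
      · rw [abs_of_neg h]; exact hπeven (φ k) x hx
    constructor
    · have := hθrconv |x| hxE.1
      rw [hclx] at this
      exact this.congr (fun k => hθeq k)
    · have := (hnπrconv |x| hxE.2).neg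
      rw [hclx] at this
      simp only [neg_neg] at this
      exact this.congr (fun k => hπeq k)
  have hae : ∀ᵐ x ∂(volume.restrict (Set.Icc (-H) H)),
      Tendsto (fun k => θn (φ k) x) atTop (nhds (θ0 x)) ∧
      Tendsto (fun k => πn (φ k) x) atTop (nhds (π0 x)) := by
    filter_upwards [ae_restrict_mem measurableSet_Icc,
      ae_restrict_of_ae (measure_eq_zero_iff_ae_notMem.1 hE0)] with x hx hxE
    exact hkey x hx hxE
  -- integrability and the integral identity
  have hintboth : IntegrableOn π0 (Set.Icc (-H) H) ∧ (∫ x in (-H)..H, π0 x) = 2 * vinf := by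
    have hle : -H ≤ H := le_of_lt hnH
    have hint : IntegrableOn π0 (Set.Icc (-H) H) := by
      refine Integrable.mono' (g := fun _ => M) (integrableOn_const measure_Icc_lt_top.ne)
        hπ0meas.aestronglyMeasurable ?_
      refine ae_of_all _ (fun x => ?_)
      rw [Real.norm_eq_abs, abs_of_nonneg (hπ0bd x).1]
      exact (hπ0bd x).2
    refine ⟨hint, ?_⟩
    have hsub : Set.Ioc (-H) H ⊆ Set.Icc (-H) H := Set.Ioc_subset_Icc_self
    have hmle : volume.restrict (Set.Ioc (-H) H) ≤ volume.restrict (Set.Icc (-H) H) :=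
      Measure.restrict_mono hsub le_rfl
    have haeIoc : ∀ᵐ x ∂(volume.restrict (Set.Ioc (-H) H)),
        Tendsto (fun k => πn (φ k) x) atTop (nhds (π0 x)) := by
      have h0 : (volume.restrict (Set.Ioc (-H) H))
          {x | ¬ Tendsto (fun k => πn (φ k) x) atTop (nhds (π0 x))} = 0 := by
        have h1 := ae_iff.1 (hae.mono (fun x hx => hx.2))
        exact le_antisymm (le_trans (hmle _) (le_of_eq h1)) zero_le
      exact ae_iff.2 h0
    have hlim : Tendsto (fun k => ∫ x in Set.Ioc (-H) H, πn (φ k) x) atTop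
        (nhds (∫ x in Set.Ioc (-H) H, π0 x)) := by
      refine tendsto_integral_of_dominated_convergence (fun _ => M) ?_
        (integrableOn_const measure_Ioc_lt_top.ne) ?_ haeIoc
      · intro k
        exact ((hπc (φ k)).aestronglyMeasurable measurableSet_Icc).mono_measure hmle
      · intro k
        filter_upwards [ae_restrict_mem measurableSet_Ioc] with x hx
        rw [Real.norm_eq_abs, abs_of_nonneg (hπbd' (φ k) x (hsub hx)).1]
        exact (hπbd' (φ k) x (hsub hx)).2
    have heq : ∀ k, (∫ x in Set.Ioc (-H) H, πn (φ k) x) = 2 * vinf := by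
      intro k
      rw [← intervalIntegral.integral_of_le hle]
      exact hπint (φ k)
    have hlim2 : Tendsto (fun _ : ℕ => 2 * vinf) atTop (nhds (∫ x in Set.Ioc (-H) H, π0 x)) := by
      rwa [tendsto_congr heq] at hlim
    rw [intervalIntegral.integral_of_le hle]
    exact (tendsto_nhds_unique tendsto_const_nhds hlim2).symm
  -- bounds for f0 and f1 on the range of θ
  obtain ⟨B0, hB0⟩ := isCompact_Icc.exists_bound_of_continuousOn
    (s := Set.Icc (0:ℝ) θinf) hf0c.continuousOn
  obtain ⟨B1, hB1⟩ := isCompact_Icc.exists_bound_of_continuousOn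
    (s := Set.Icc (0:ℝ) θinf) hf1c.continuousOn
  set B : ℝ := max (max B0 B1) 0 with hBdef
  have hB : 0 ≤ B := le_max_right _ _
  have hBf0 : ∀ t ∈ Set.Icc (0:ℝ) θinf, |f0 t| ≤ B := by
    intro t ht
    refine le_trans ?_ (le_trans (le_max_left B0 B1) (le_max_left _ _))
    rw [← Real.norm_eq_abs]
    exact hB0 t ht
  have hBf1 : ∀ t ∈ Set.Icc (0:ℝ) θinf, |f1 t| ≤ B := by
    intro t ht
    refine le_trans ?_ (le_trans (le_max_right B0 B1) (le_max_left _ _))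
    rw [← Real.norm_eq_abs]
    exact hB1 t ht
  -- the limit aging relation
  have hg0ae : ∀ᵐ x ∂(volume.restrict (Set.Icc (-H) H)), f0 (θ0 x) = π0 x * f1 (θ0 x) := by
    set C₂ : ℝ := M * B + B with hC₂
    have hC₂0 : 0 ≤ C₂ := by positivity
    set g : ℝ → ℝ := fun x => π0 x * f1 (θ0 x) - f0 (θ0 x) with hgdef
    have hgmeas : Measurable g :=
      (hπ0meas.mul (hf1c.measurable.comp hθ0meas)).sub (hf0c.measurable.comp hθ0meas)
    have hbd_aux : ∀ (p t : ℝ), 0 ≤ p → p ≤ M → t ∈ Set.Icc (0:ℝ) θinf →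
        |p * f1 t - f0 t| ≤ C₂ := by
      intro p t hp hpM ht
      have h1 := hBf1 t ht
      have h0 := hBf0 t ht
      have : |p * f1 t| ≤ M * B := by
        rw [abs_mul, abs_of_nonneg hp]
        exact mul_le_mul hpM h1 (abs_nonneg _) hM0
      calc |p * f1 t - f0 t| ≤ |p * f1 t| + |f0 t| := abs_sub _ _
        _ ≤ M * B + B := add_le_add this h0
    have hgbd : ∀ x, |g x| ≤ C₂ := fun x =>
      hbd_aux _ _ (hπ0bd x).1 (hπ0bd x).2 ⟨(hθ0bd x).1, (hθ0bd x).2⟩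
    have hgi : ∀ a b : ℝ, IntervalIntegrable g volume a b := by
      intro a b
      rw [intervalIntegrable_iff]
      refine Integrable.mono' (g := fun _ => C₂)
        (integrableOn_const measure_Ioc_lt_top.ne) hgmeas.aestronglyMeasurable ?_
      exact ae_of_all _ (fun x => by rw [Real.norm_eq_abs]; exact hgbd x)
    set G : ℝ → ℝ := fun x => ∫ t in (0:ℝ)..x, g t with hGdef
    have hGcont : Continuous G := intervalIntegral.continuous_primitive hgi 0
    -- the approximating sequence
    set gk : ℕ → ℝ → ℝ := fun k x => πn (φ k) x * f1 (θn (φ k) x) - f0 (θn (φ k) x) with hgkdef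
    have hgkbd : ∀ k, ∀ x ∈ Set.Icc (-H) H, |gk k x| ≤ C₂ := by
      intro k x hx
      exact hbd_aux _ _ (hπbd' (φ k) x hx).1 (hπbd' (φ k) x hx).2
        ⟨(hθbdd (φ k) x hx).1, (hθbdd (φ k) x hx).2⟩
    have hgkcont : ∀ k, ContinuousOn (gk k) (Set.Icc (-H) H) := by
      intro k
      exact ((hπc (φ k)).mul (hf1c.comp_continuousOn ((hθc2 (φ k)).continuousOn))).sub
        (hf0c.comp_continuousOn ((hθc2 (φ k)).continuousOn))
    have hgkconv : ∀ x ∈ Set.Icc (-H) H, x ∉ E →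
        Tendsto (fun k => gk k x) atTop (nhds (g x)) := by
      intro x hx hxE
      obtain ⟨hkθ, hkπ⟩ := hkey x hx hxE
      exact (hkπ.mul ((hf1c.tendsto _).comp hkθ)).sub ((hf0c.tendsto _).comp hkθ)
    -- convergence of the primitives
    have hGconv : ∀ x ∈ Set.Icc (0:ℝ) H,
        Tendsto (fun k => ∫ t in (0:ℝ)..x, gk k t) atTop (nhds (G x)) := by
      intro x hx
      have hsub : Set.Ioc (0:ℝ) x ⊆ Set.Icc (-H) H := fun t ht =>
        ⟨by linarith [ht.1.le], le_trans ht.2 hx.2⟩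
      have hmle : volume.restrict (Set.Ioc (0:ℝ) x) ≤ volume.restrict (Set.Icc (-H) H) :=
        Measure.restrict_mono hsub le_rfl
      simp only [hGdef, intervalIntegral.integral_of_le hx.1]
      refine tendsto_integral_of_dominated_convergence (fun _ => C₂) ?_
        (integrableOn_const measure_Ioc_lt_top.ne) ?_ ?_
      · intro k
        exact ((hgkcont k).aestronglyMeasurable measurableSet_Icc).mono_measure hmle
      · intro k
        filter_upwards [ae_restrict_mem measurableSet_Ioc] with t ht
        rw [Real.norm_eq_abs]
        exact hgkbd k t (hsub ht)
      · filter_upwards [ae_restrict_mem measurableSet_Ioc,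
          ae_restrict_of_ae (measure_eq_zero_iff_ae_notMem.1 hE0)] with t ht htE
        exact hgkconv t (hsub ht) htE
    have hud : UniqueDiffOn ℝ (Set.Icc (-H) H) := uniqueDiffOn_Icc hnH
    -- derivative vanishes at 0
    have hT10 : ∀ n, derivWithin (θn n) (Set.Icc (-H) H) 0 = 0 := by
      intro n
      have h0m : (0:ℝ) ∈ Set.Ioo (-H) H := ⟨by linarith, hH⟩
      have hnb : Set.Icc (-H) H ∈ nhds (0:ℝ) := Icc_mem_nhds h0m.1 h0m.2
      have hda : DifferentiableAt ℝ (θn n) 0 :=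
        (((hθc2 n).differentiableOn (by norm_num)) 0 (Set.Ioo_subset_Icc_self h0m)).differentiableAt hnb
      have heq : (fun y => θn n (-y)) =ᶠ[nhds (0:ℝ)] (θn n) := by
        filter_upwards [hnb] with y hy using hθeven n y hy
      have h1 : deriv (fun y => θn n (-y)) 0 = deriv (θn n) 0 := heq.deriv_eq
      have h2 : HasDerivAt (fun y => θn n (-y)) (-(deriv (θn n) 0)) 0 := by
        have hneg : HasDerivAt (fun y : ℝ => -y) (-1) 0 := (hasDerivAt_id (0:ℝ)).neg
        have hT : HasDerivAt (θn n) (deriv (θn n) 0) (-(0:ℝ)) := by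
          rw [neg_zero]; exact hda.hasDerivAt
        have := HasDerivAt.comp (0:ℝ) hT hneg
        exact (by simpa using this : HasDerivAt (θn n ∘ Neg.neg) (-(deriv (θn n) 0)) 0)
      have h3 : deriv (fun y => θn n (-y)) 0 = -(deriv (θn n) 0) := h2.deriv
      have h4 : deriv (θn n) 0 = 0 := by
        rw [h3] at h1; linarith
      rw [derivWithin_of_mem_nhds hnb, h4]
    -- derivative is nonnegative on (0, H)
    have hT1nn : ∀ n, ∀ x ∈ Set.Ioo (0:ℝ) H, 0 ≤ derivWithin (θn n) (Set.Icc (-H) H) x := by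
      intro n x hx
      have hxm : x ∈ Set.Ioo (-H) H := ⟨by linarith [hx.1], hx.2⟩
      have hnb : Set.Icc (-H) H ∈ nhds x := Icc_mem_nhds hxm.1 hxm.2
      have hda : DifferentiableAt ℝ (θn n) x :=
        (((hθc2 n).differentiableOn (by norm_num)) x (Set.Ioo_subset_Icc_self hxm)).differentiableAt hnb
      rw [derivWithin_of_mem_nhds hnb]
      have hslope := hasDerivAt_iff_tendsto_slope.1 hda.hasDerivAt
      have hle : nhdsWithin x (Set.Ioi x) ≤ nhdsWithin x {x}ᶜ :=
        nhdsWithin_mono _ (fun y hy => ne_of_gt hy)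
      refine ge_of_tendsto (hslope.mono_left hle) ?_
      filter_upwards [Ioo_mem_nhdsGT_of_mem (Set.left_mem_Ico.2 hx.2)] with y hy
      rw [slope_def_field]
      apply div_nonneg _ (by linarith [hy.1])
      have := hθmono n ⟨hx.1.le, hx.2.le⟩ ⟨by linarith [hx.1, hy.1], hy.2.le⟩ hy.1.le
      linarith
    -- FTC identity
    have hGk : ∀ k, ∀ x ∈ Set.Ico (0:ℝ) H, (∫ t in (0:ℝ)..x, gk k t)
        = κ (φ k) * derivWithin (θn (φ k)) (Set.Icc (-H) H) x := by
      intro k x hx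
      have hx0 : (0:ℝ) ≤ x := hx.1
      have hIccIoo : Set.Icc (0:ℝ) x ⊆ Set.Ioo (-H) H := fun t ht =>
        ⟨by linarith [ht.1], lt_of_le_of_lt ht.2 hx.2⟩
      have hT1cd : ContDiffOn ℝ 1 (derivWithin (θn (φ k)) (Set.Icc (-H) H)) (Set.Icc (-H) H) :=
        (hθc2 (φ k)).derivWithin hud (by norm_num)
      have hderiv : ∀ t ∈ Set.uIcc (0:ℝ) x, HasDerivAt (derivWithin (θn (φ k)) (Set.Icc (-H) H))
          (derivWithin (derivWithin (θn (φ k)) (Set.Icc (-H) H)) (Set.Icc (-H) H) t) t := by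
        intro t ht
        rw [Set.uIcc_of_le hx0] at ht
        have htIoo := hIccIoo ht
        have hnb : Set.Icc (-H) H ∈ nhds t := Icc_mem_nhds htIoo.1 htIoo.2
        have hda : DifferentiableAt ℝ (derivWithin (θn (φ k)) (Set.Icc (-H) H)) t :=
          ((hT1cd.differentiableOn (by norm_num)) t (Set.Ioo_subset_Icc_self htIoo)).differentiableAt hnb
        rw [derivWithin_of_mem_nhds hnb]
        exact hda.hasDerivAt
      have hint : IntervalIntegrable
          (derivWithin (derivWithin (θn (φ k)) (Set.Icc (-H) H)) (Set.Icc (-H) H)) volume 0 x := by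
        apply ContinuousOn.intervalIntegrable
        rw [Set.uIcc_of_le hx0]
        exact (hT1cd.continuousOn_derivWithin hud le_rfl).mono
          (subset_trans (Set.Icc_subset_Icc le_rfl hx.2.le) hIccsub)
      have hFTC := intervalIntegral.integral_eq_sub_of_hasDerivAt hderiv hint
      have hcongr : Set.EqOn (gk k)
          (fun t => κ (φ k) * derivWithin (derivWithin (θn (φ k)) (Set.Icc (-H) H))
            (Set.Icc (-H) H) t) (Set.uIcc (0:ℝ) x) := by
        intro t ht
        rw [Set.uIcc_of_le hx0] at ht
        exact (haging (φ k) t (hIccIoo ht)).symm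
      rw [intervalIntegral.integral_congr hcongr, intervalIntegral.integral_const_mul, hFTC,
        hT10 (φ k), sub_zero]
    -- G is nonnegative on [0, H)
    have hGnn : ∀ x ∈ Set.Ico (0:ℝ) H, 0 ≤ G x := by
      intro x hx
      rcases hx.1.eq_or_lt with h0 | h0
      · simp [hGdef, ← h0]
      · refine ge_of_tendsto (hGconv x ⟨hx.1, hx.2.le⟩) ?_
        refine Eventually.of_forall (fun k => ?_)
        rw [hGk k x hx]
        exact mul_nonneg (hκpos (φ k)).le (hT1nn (φ k) x ⟨h0, hx.2⟩)
    -- integral of G over (0, H] is zero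
    have hGIoc : (∫ x in Set.Ioc (0:ℝ) H, G x) = 0 := by
      have hval : ∀ k, (∫ x in Set.Ioc (0:ℝ) H, (∫ t in (0:ℝ)..x, gk k t))
          = κ (φ k) * (θn (φ k) H - θn (φ k) 0) := by
        intro k
        have hcae : (fun x => ∫ t in (0:ℝ)..x, gk k t)
            =ᵐ[volume.restrict (Set.Ioc (0:ℝ) H)]
            (fun x => κ (φ k) * derivWithin (θn (φ k)) (Set.Icc (-H) H) x) := by
          have hbad : {x | ¬ ((∫ t in (0:ℝ)..x, gk k t)
              = κ (φ k) * derivWithin (θn (φ k)) (Set.Icc (-H) H) x)} ∩ Set.Ioc (0:ℝ) H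
              ⊆ {H} := by
            intro x ⟨hxb, hxIoc⟩
            by_contra hne
            exact hxb (hGk k x ⟨hxIoc.1.le, lt_of_le_of_ne hxIoc.2 hne⟩)
          have : (volume.restrict (Set.Ioc (0:ℝ) H))
              {x | ¬ ((∫ t in (0:ℝ)..x, gk k t)
                = κ (φ k) * derivWithin (θn (φ k)) (Set.Icc (-H) H) x)} = 0 := by
            rw [Measure.restrict_apply' measurableSet_Ioc]
            exact measure_mono_null hbad (measure_singleton H)
          exact this
        rw [integral_congr_ae hcae]
        have hT1cOn : ContinuousOn (derivWithin (θn (φ k)) (Set.Icc (-H) H)) (Set.Icc (0:ℝ) H) :=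
          ((hθc2 (φ k)).continuousOn_derivWithin hud one_le_two).mono hIccsub
        have hintT1 : IntervalIntegrable (derivWithin (θn (φ k)) (Set.Icc (-H) H)) volume 0 H := by
          apply ContinuousOn.intervalIntegrable
          rwa [Set.uIcc_of_le hH.le]
        have hFTC2 : (∫ t in (0:ℝ)..H, derivWithin (θn (φ k)) (Set.Icc (-H) H) t)
            = θn (φ k) H - θn (φ k) 0 := by
          apply intervalIntegral.integral_eq_sub_of_hasDeriv_right_of_le hH.le
            (((hθc2 (φ k)).continuousOn).mono hIccsub) _ hintT1
          intro y hy
          have hym : y ∈ Set.Ioo (-H) H := ⟨by linarith [hy.1], hy.2⟩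
          have hnb : Set.Icc (-H) H ∈ nhds y := Icc_mem_nhds hym.1 hym.2
          have hda : DifferentiableAt ℝ (θn (φ k)) y :=
            (((hθc2 (φ k)).differentiableOn (by norm_num)) y
              (Set.Ioo_subset_Icc_self hym)).differentiableAt hnb
          rw [derivWithin_of_mem_nhds hnb]
          exact hda.hasDerivAt.hasDerivWithinAt
        rw [← intervalIntegral.integral_of_le hH.le, intervalIntegral.integral_const_mul, hFTC2]
      -- left side tends to the integral of G
      have hlim1 : Tendsto (fun k => ∫ x in Set.Ioc (0:ℝ) H, (∫ t in (0:ℝ)..x, gk k t)) atTop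
          (nhds (∫ x in Set.Ioc (0:ℝ) H, G x)) := by
        refine tendsto_integral_of_dominated_convergence (fun _ => C₂ * H) ?_
          (integrableOn_const measure_Ioc_lt_top.ne) ?_ ?_
        · intro k
          have hGkcont : ContinuousOn (fun x => ∫ t in (0:ℝ)..x, gk k t) (Set.Icc (0:ℝ) H) := by
            have hio : IntegrableOn (gk k) (Set.uIcc (0:ℝ) H) volume := by
              rw [Set.uIcc_of_le hH.le]
              exact ((hgkcont k).mono hIccsub).integrableOn_Icc
            have := intervalIntegral.continuousOn_primitive_interval hio
            rwa [Set.uIcc_of_le hH.le] at this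
          exact (hGkcont.aestronglyMeasurable measurableSet_Icc).mono_measure
            (Measure.restrict_mono Set.Ioc_subset_Icc_self le_rfl)
        · intro k
          filter_upwards [ae_restrict_mem measurableSet_Ioc] with x hx
          have : ∀ t ∈ Set.uIoc (0:ℝ) x, ‖gk k t‖ ≤ C₂ := by
            intro t ht
            rw [Set.uIoc_of_le hx.1.le] at ht
            rw [Real.norm_eq_abs]
            exact hgkbd k t ⟨by linarith [ht.1], le_trans ht.2 hx.2⟩
          have hb := intervalIntegral.norm_integral_le_of_norm_le_const this
          rw [sub_zero] at hb
          refine le_trans hb ?_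
          rw [abs_of_nonneg hx.1.le]
          exact mul_le_mul_of_nonneg_left hx.2 hC₂0
        · filter_upwards [ae_restrict_mem measurableSet_Ioc] with x hx
          exact hGconv x ⟨hx.1.le, hx.2⟩
      -- right side tends to zero
      have hlim2 : Tendsto (fun k => κ (φ k) * (θn (φ k) H - θn (φ k) 0)) atTop (nhds 0) := by
        apply squeeze_zero_norm (a := fun k => κ (φ k) * θinf)
        · intro k
          rw [Real.norm_eq_abs, abs_mul, abs_of_pos (hκpos (φ k))]
          apply mul_le_mul_of_nonneg_left _ (hκpos (φ k)).le
          rw [abs_sub_comm, abs_of_nonpos (by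
            linarith [hθbcr (φ k), (hθbdd (φ k) 0 ⟨by linarith, hH.le⟩).2])]
          have h1 := (hθbdd (φ k) 0 ⟨by linarith, hH.le⟩).1
          have h2 := hθbcr (φ k)
          linarith
        · simpa using hκφ.mul_const θinf
      have hto : Tendsto (fun k => κ (φ k) * (θn (φ k) H - θn (φ k) 0)) atTop
          (nhds (∫ x in Set.Ioc (0:ℝ) H, G x)) := by rwa [tendsto_congr hval] at hlim1
      exact (tendsto_nhds_unique hto hlim2)
    -- G vanishes identically on (0, H)
    have hGzero : ∀ x ∈ Set.Ioo (0:ℝ) H, G x = 0 := by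
      have hGint : IntegrableOn G (Set.Ioc (0:ℝ) H) volume :=
        (hGcont.continuousOn).integrableOn_Icc.mono_set Set.Ioc_subset_Icc_self
      have hGnnae : 0 ≤ᵐ[volume.restrict (Set.Ioc (0:ℝ) H)] G := by
        have hbad : {x | ¬ (0 ≤ G x)} ∩ Set.Ioc (0:ℝ) H ⊆ {H} := by
          intro x ⟨hxb, hxIoc⟩
          by_contra hne
          exact hxb (hGnn x ⟨hxIoc.1.le, lt_of_le_of_ne hxIoc.2 hne⟩)
        have : (volume.restrict (Set.Ioc (0:ℝ) H)) {x | ¬ (0 ≤ G x)} = 0 := by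
          rw [Measure.restrict_apply' measurableSet_Ioc]
          exact measure_mono_null hbad (measure_singleton H)
        exact this
      have hGae0 : G =ᵐ[volume.restrict (Set.Ioc (0:ℝ) H)] 0 :=
        (integral_eq_zero_iff_of_nonneg_ae hGnnae hGint).1 hGIoc
      -- continuity upgrade
      intro x hx
      by_contra hne
      have hpos : 0 < |G x| := abs_pos.2 hne
      obtain ⟨δ, hδ, hball⟩ := Metric.continuousAt_iff.1 hGcont.continuousAt (|G x| / 2) (by linarith)
      set l : ℝ := max 0 (x - δ/2) with hl
      set u : ℝ := min H (x + δ/2) with hu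
      have hlx : l < x := by
        apply max_lt hx.1; linarith
      have hxu : x < u := by
        apply lt_min hx.2; linarith
      have hJsub : Set.Ioo l u ⊆ {y | G y ≠ 0} ∩ Set.Ioc (0:ℝ) H := by
        intro y hy
        have hyd : dist y x < δ := by
          rw [Real.dist_eq, abs_sub_lt_iff]
          constructor
          · have := hy.2; have : y < x + δ/2 := lt_of_lt_of_le hy.2 (min_le_right _ _); linarith
          · have : x - δ/2 < y := lt_of_le_of_lt (le_max_right _ _) hy.1; linarith
        have := hball hyd
        rw [Real.dist_eq] at this
        constructor
        · intro h0
          rw [h0, zero_sub, abs_neg] at this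
          linarith
        · exact ⟨lt_of_le_of_lt (le_max_left _ _) hy.1, le_trans hy.2.le (min_le_left _ _)⟩
      have hmeas0 : (volume.restrict (Set.Ioc (0:ℝ) H)) {y | G y ≠ 0} = 0 := hGae0
      rw [Measure.restrict_apply' measurableSet_Ioc] at hmeas0
      have : volume (Set.Ioo l u) = 0 := measure_mono_null hJsub hmeas0
      rw [Real.volume_Ioo] at this
      have hlt : (0:ℝ) < u - l := by linarith
      simp only [ENNReal.ofReal_eq_zero] at this
      linarith
    -- Lebesgue differentiation: g = 0 a.e. on (0, H)
    have hloc : LocallyIntegrable g volume := by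
      intro x
      refine ⟨Set.Icc (x-1) (x+1), Icc_mem_nhds (by linarith) (by linarith), ?_⟩
      refine Integrable.mono' (g := fun _ => C₂)
        (integrableOn_const measure_Icc_lt_top.ne) hgmeas.aestronglyMeasurable ?_
      exact ae_of_all _ (fun y => by rw [Real.norm_eq_abs]; exact hgbd y)
    have hgae : ∀ᵐ x ∂(volume : Measure ℝ), x ∈ Set.Ioo (0:ℝ) H → g x = 0 := by
      filter_upwards [(IsUnifLocDoublingMeasure.vitaliFamily (volume : Measure ℝ) 1).ae_tendsto_average hloc]
        with x hx hxIoo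
      have h2 : Tendsto (fun y => ⨍ t in Set.Icc x y, g t) (nhdsWithin x (Set.Ioi x)) (nhds (g x)) :=
        hx.comp (Real.tendsto_Icc_vitaliFamily_right x)
      have hev : ∀ᶠ y in nhdsWithin x (Set.Ioi x), (⨍ t in Set.Icc x y, g t) = 0 := by
        filter_upwards [Ioo_mem_nhdsGT_of_mem (Set.left_mem_Ico.2 hxIoo.2)] with y hy
        have hxy : x ≤ y := hy.1.le
        have hint0 : (∫ t in Set.Icc x y, g t) = 0 := by
          rw [MeasureTheory.integral_Icc_eq_integral_Ioc, ← intervalIntegral.integral_of_le hxy]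
          have : (∫ t in x..y, g t) = G y - G x :=
            (intervalIntegral.integral_interval_sub_left (hgi 0 y) (hgi 0 x)).symm
          rw [this, hGzero y ⟨lt_trans hxIoo.1 hy.1, hy.2⟩, hGzero x hxIoo, sub_zero]
        rw [setAverage_eq, hint0, smul_zero]
      have h3 : Tendsto (fun y => ⨍ t in Set.Icc x y, g t) (nhdsWithin x (Set.Ioi x)) (nhds 0) :=
        Tendsto.congr' (EventuallyEq.symm hev) tendsto_const_nhds
      exact tendsto_nhds_unique h2 h3
    -- conclusion
    have hgsym : ∀ x : ℝ, g (-x) = g x := by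
      intro x
      simp only [hgdef, hθ0even, hπ0even]
    set N : Set ℝ := {x | ¬ (x ∈ Set.Ioo (0:ℝ) H → g x = 0)} with hN
    have hN0 : volume N = 0 := ae_iff.1 hgae
    have hNneg0 : volume (Neg.neg ⁻¹' N) = 0 := by
      rw [Measure.measure_preimage_neg]
      exact hN0
    have hbig : volume (N ∪ Neg.neg ⁻¹' N ∪ ({-H, 0, H} : Set ℝ)) = 0 := by
      refine measure_union_null (measure_union_null hN0 hNneg0) ?_
      exact Set.Countable.measure_zero (Set.Finite.countable (by
        apply Set.Finite.insert; apply Set.Finite.insert; exact Set.finite_singleton _)) _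
    filter_upwards [ae_restrict_mem measurableSet_Icc,
      ae_restrict_of_ae (measure_eq_zero_iff_ae_notMem.1 hbig)] with x hxIcc hxBig
    have hgx : g x = 0 := by
      rcases lt_trichotomy x 0 with hx0 | hx0 | hx0
      · have hxm : -x ∈ Set.Ioo (0:ℝ) H ∨ x = -H := by
          rcases hxIcc.1.eq_or_lt with h | h
          · exact Or.inr h.symm
          · exact Or.inl ⟨by linarith, by linarith⟩
        rcases hxm with h | h
        · have : -x ∉ N → (-x ∈ Set.Ioo (0:ℝ) H → g (-x) = 0) := by
            intro hn; by_contra hcon; exact hn hcon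
          have hnn : -x ∉ N := fun hmem => hxBig (Or.inl (Or.inr hmem))
          rw [← hgsym x]
          exact (this hnn) h
        · exact absurd (by rw [h]; exact Or.inl rfl : x ∈ ({-H, 0, H} : Set ℝ)) (fun hh => hxBig (Or.inr hh))
      · exact absurd (by rw [hx0]; exact Or.inr (Or.inl rfl) : x ∈ ({-H, 0, H} : Set ℝ)) (fun hh => hxBig (Or.inr hh))
      · rcases eq_or_lt_of_le hxIcc.2 with h | h
        · exact absurd (by rw [h]; exact Or.inr (Or.inr rfl) : x ∈ ({-H, 0, H} : Set ℝ))
            (fun hh => hxBig (Or.inr hh))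
        · have hnn : x ∉ N := fun hmem => hxBig (Or.inl (Or.inl hmem))
          have : x ∈ Set.Ioo (0:ℝ) H → g x = 0 := by
            by_contra hcon; exact hnn hcon
          exact this ⟨hx0, h⟩
    have := sub_eq_zero.1 hgx
    linarith [this]
  refine ⟨φ, hφ, σ0, θ0, π0, hθ0meas, hπ0meas, ?_, ?_, ?_, hσconv, hae, hintboth.1,
    hintboth.2, ?_⟩
  · intro x _
    exact ⟨hθ0even x, hπ0even x⟩
  · intro x hx y hy hxy
    simp only [hθ0]
    rw [abs_of_nonneg hx.1, abs_of_nonneg hy.1]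
    exact hθrmono hxy
  · intro x hx y hy hxy
    simp only [hπ0]
    rw [abs_of_nonneg hx.1, abs_of_nonneg hy.1]
    exact neg_le_neg (hnπrmono hxy)
  · -- the limit relations hold a.e.
    filter_upwards [hg0ae, hae, ae_restrict_mem measurableSet_Icc] with x h1 hconvx hxIcc
    refine ⟨h1, ?_⟩
    have hμlim : Tendsto (fun k => μ (πn (φ k) x) (θn (φ k) x)) atTop
        (nhds (μ (π0 x) (θ0 x))) := by
      have := (hμc.tendsto (π0 x, θ0 x)).comp (hconvx.2.prodMk_nhds hconvx.1)
      exact this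
    rcases (hπ0bd x).1.eq_or_lt with h0 | hpos
    · -- π0 x = 0
      have hm : c ≤ μ (π0 x) (θ0 x) := hμge _ _ (hπ0bd x).1
      have hmpos : 0 < μ (π0 x) (θ0 x) := lt_of_lt_of_le hc hm
      have habs : |σ0| ≤ μ (π0 x) (θ0 x) :=
        le_of_tendsto_of_tendsto' hσconv.abs hμlim (fun k => hσle (φ k) x hxIcc)
      refine ⟨σ0 / μ (π0 x) (θ0 x), ?_, ?_⟩
      · have hss : SignSet (π0 x) = Set.Icc (-1) 1 := by
          rw [SignSet, if_neg (by rw [← h0]; exact lt_irrefl 0), if_neg (by rw [← h0]; exact lt_irrefl 0)]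
        rw [hss]
        have : |σ0 / μ (π0 x) (θ0 x)| ≤ 1 := by
          rw [abs_div, abs_of_pos hmpos]
          exact (div_le_one hmpos).2 habs
        exact abs_le.1 this
      · field_simp
    · -- π0 x > 0
      have hevp : ∀ᶠ k in atTop, 0 < πn (φ k) x := hconvx.2.eventually (eventually_gt_nhds hpos)
      have hev : (fun k => σn (φ k)) =ᶠ[atTop] (fun k => μ (πn (φ k) x) (θn (φ k) x)) := by
        filter_upwards [hevp] with k hk
        obtain ⟨ξ, hξ, hσ⟩ := hflow (φ k) x hxIcc
        rw [SignSet, if_pos hk, Set.mem_singleton_iff] at hξ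
        rw [hξ, mul_one] at hσ
        exact hσ.symm
      have hσeq : σ0 = μ (π0 x) (θ0 x) :=
        tendsto_nhds_unique (hσconv.congr' hev) hμlim
      refine ⟨1, ?_, by rw [mul_one, hσeq]⟩
      rw [SignSet, if_pos hpos]
      exact Set.mem_singleton 1
end
end
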